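/- arXiv:math/0601368 — 3 statements merged into one kernel-verified Lean document; each statement's English description precedes it below -/
import Mathlib

section
/- Let 1 ≤ m ≤ n and k ≥ 1. Then there is an injective group homomorphism τ_k(F_m) → τ_k(F_n); indeed F_m is a homotopy retract of F_n, so this monomorphism is split. -/
/-!
STATEMENT 7: Let `1 ≤ m ≤ n` and `k ≥ 1`.  Then there is an injective group
homomorphism `τ_k(F_m) → τ_k(F_n)`; indeed `F_m` is a homotopy retract of `F_n`
(there are pointed maps `i : F_m → F_n`, `r : F_n → F_m` with `r ∘ i` pointed-homotopic
to the identity), and the monomorphism is split by a homomorphism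
`τ_k(F_n) → τ_k(F_m)`.
-/

open ContinuousMap Topology

/-- The `n`-torus `T^n`. -/
abbrev Torus (n : ℕ) : Type := Fin n → Circle

/-- The `n`-th Fox torus homotopy group `τ_n(X,x₀) = π₁(X^{T^{n-1}}, x̄₀)`. -/
noncomputable abbrev FoxTau (n : ℕ) (X : Type u) [TopologicalSpace X] (x₀ : X) :=
  FundamentalGroup C(Torus (n - 1), X) (ContinuousMap.const (Torus (n - 1)) x₀)

/-- The set collapsed in the reduced suspension of `(W, w₀)`. -/
def suspCollapsed (W : Type u) (w₀ : W) (p : W × unitInterval) : Prop :=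
  p.2 = 0 ∨ p.2 = 1 ∨ p.1 = w₀

/-- The relation generating the reduced suspension quotient. -/
def SuspRel (W : Type u) (w₀ : W) (p q : W × unitInterval) : Prop :=
  suspCollapsed W w₀ p ∧ suspCollapsed W w₀ q

/-- The reduced suspension `ΣW` of the pointed space `(W, w₀)`. -/
def Susp (W : Type u) [TopologicalSpace W] (w₀ : W) : Type u :=
  Quot (SuspRel W w₀)

instance (W : Type u) [TopologicalSpace W] (w₀ : W) : TopologicalSpace (Susp W w₀) :=
  instTopologicalSpaceQuot

/-- Basepoint of the reduced suspension. -/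
def suspBase (W : Type u) [TopologicalSpace W] (w₀ : W) : Susp W w₀ :=
  Quot.mk _ (w₀, 0)

/-- The `n`-th Fox space `F_n = Σ(T^{n-1} ⊔ ∗)`. -/
def FoxSpace (n : ℕ) : Type :=
  Susp (Torus (n - 1) ⊕ Unit) (Sum.inr ())

noncomputable instance (n : ℕ) : TopologicalSpace (FoxSpace n) := by
  unfold FoxSpace; infer_instance

/-- Basepoint of the `n`-th Fox space. -/
noncomputable def foxSpaceBase (n : ℕ) : FoxSpace n :=
  suspBase (Torus (n - 1) ⊕ Unit) (Sum.inr ())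

/- ### Auxiliary machinery -/

attribute [local instance] Path.Homotopic.setoid

open CategoryTheory

/-- The homomorphism on fundamental groups induced by a continuous map. -/
noncomputable def FoxAux.piMap {X Y : Type} [TopologicalSpace X] [TopologicalSpace Y]
    (f : C(X, Y)) (x : X) :
    FundamentalGroup X x →* FundamentalGroup Y (f x) :=
  Functor.mapEnd (FundamentalGroupoid.mk x)
    (FundamentalGroupoid.fundamentalGroupoidFunctor.map (X := TopCat.of X) (Y := TopCat.of Y) (TopCat.ofHom f))

/-- Functoriality of the reduced suspension for pointed maps. -/
def FoxAux.suspMap {W W' : Type} [TopologicalSpace W] [TopologicalSpace W']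
    (f : C(W, W')) (w₀ : W) (w₀' : W') (h : f w₀ = w₀') :
    C(Susp W w₀, Susp W' w₀') where
  toFun := Quot.map (fun p => (f p.1, p.2)) (by
    rintro p q ⟨hp, hq⟩
    refine ⟨?_, ?_⟩
    · rcases hp with h1 | h1 | h1
      · exact Or.inl h1
      · exact Or.inr (Or.inl h1)
      · exact Or.inr (Or.inr (by simp [h1, h]))
    · rcases hq with h1 | h1 | h1
      · exact Or.inl h1
      · exact Or.inr (Or.inl h1)
      · exact Or.inr (Or.inr (by simp [h1, h])))
  continuous_toFun := continuous_quot_lift _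
    (continuous_quot_mk.comp ((f.continuous.comp continuous_fst).prodMk continuous_snd))

/-- Inclusion of a smaller torus into a bigger one, filling with `1`. -/
noncomputable def FoxAux.torusIncl (a b : ℕ) (h : a ≤ b) : C(Torus a, Torus b) where
  toFun x := fun i => if hi : (i : ℕ) < a then x ⟨i, hi⟩ else 1
  continuous_toFun := continuous_pi fun i => by
    by_cases hi : (i : ℕ) < a
    · simpa only [dif_pos hi] using continuous_apply _
    · simpa only [dif_neg hi] using continuous_const

/-- Projection of a bigger torus onto a smaller one. -/
def FoxAux.torusProj (a b : ℕ) (h : a ≤ b) : C(Torus b, Torus a) where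
  toFun y := fun i => y (Fin.castLE h i)
  continuous_toFun := continuous_pi fun i => continuous_apply _

lemma FoxAux.torus_retract (a b : ℕ) (h : a ≤ b) (x : Torus a) :
    FoxAux.torusProj a b h (FoxAux.torusIncl a b h x) = x := by
  funext i
  show (if hi : ((Fin.castLE h i : Fin b) : ℕ) < a then x ⟨_, hi⟩ else 1) = x i
  rw [dif_pos (by simpa using i.isLt)]
  exact congrArg x (Fin.ext (by simp))

/-- Extend a pointed map between types to the sum with `Unit`. -/
def FoxAux.sumMap {A B : Type} [TopologicalSpace A] [TopologicalSpace B] (f : C(A, B)) :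
    C(A ⊕ Unit, B ⊕ Unit) where
  toFun := Sum.map f id
  continuous_toFun := f.continuous.sumMap continuous_id

theorem foxTau_foxSpace_monomorphism (m n k : ℕ) (hm : 1 ≤ m) (hmn : m ≤ n) (hk : 1 ≤ k) :
    (∃ (i : C(FoxSpace m, FoxSpace n)) (r : C(FoxSpace n, FoxSpace m)),
      i (foxSpaceBase m) = foxSpaceBase n ∧ r (foxSpaceBase n) = foxSpaceBase m ∧
      (r.comp i).HomotopicRel (ContinuousMap.id (FoxSpace m)) {foxSpaceBase m}) ∧
    (∃ (φ : FoxTau k (FoxSpace m) (foxSpaceBase m) →* FoxTau k (FoxSpace n) (foxSpaceBase n))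
       (ρ : FoxTau k (FoxSpace n) (foxSpaceBase n) →* FoxTau k (FoxSpace m) (foxSpaceBase m)),
      ρ.comp φ = MonoidHom.id (FoxTau k (FoxSpace m) (foxSpaceBase m)) ∧
      Function.Injective φ) := by
  have hab : m - 1 ≤ n - 1 := Nat.sub_le_sub_right hmn 1
  -- the maps on the Fox spaces
  let i : C(FoxSpace m, FoxSpace n) :=
    FoxAux.suspMap (FoxAux.sumMap (FoxAux.torusIncl _ _ hab)) _ _ rfl
  let r : C(FoxSpace n, FoxSpace m) :=
    FoxAux.suspMap (FoxAux.sumMap (FoxAux.torusProj _ _ hab)) _ _ rfl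
  have hri : r.comp i = ContinuousMap.id (FoxSpace m) := by
    ext z
    induction z using Quot.ind with | _ p => ?_
    have h1 : Sum.map (FoxAux.torusProj (m - 1) (n - 1) hab) id
        (Sum.map (FoxAux.torusIncl (m - 1) (n - 1) hab) id p.1) = p.1 := by
      rcases p.1 with x | u
      · exact congrArg Sum.inl (FoxAux.torus_retract _ _ hab x)
      · rfl
    exact congrArg
      (fun w => Quot.mk (SuspRel (Torus (m - 1) ⊕ Unit) (Sum.inr ())) (w, p.2)) h1
  refine ⟨⟨i, r, rfl, rfl, by rw [hri]; exact ⟨ContinuousMap.HomotopyRel.refl _ _⟩⟩, ?_⟩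
  -- induced maps on mapping spaces
  let Pi : C(C(Torus (k - 1), FoxSpace m), C(Torus (k - 1), FoxSpace n)) :=
    ⟨fun g => i.comp g, ContinuousMap.continuous_postcomp i⟩
  let Pr : C(C(Torus (k - 1), FoxSpace n), C(Torus (k - 1), FoxSpace m)) :=
    ⟨fun g => r.comp g, ContinuousMap.continuous_postcomp r⟩
  let φ : FoxTau k (FoxSpace m) (foxSpaceBase m) →* FoxTau k (FoxSpace n) (foxSpaceBase n) :=
    FoxAux.piMap Pi (ContinuousMap.const (Torus (k - 1)) (foxSpaceBase m))
  let ρ : FoxTau k (FoxSpace n) (foxSpaceBase n) →* FoxTau k (FoxSpace m) (foxSpaceBase m) :=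
    FoxAux.piMap Pr (ContinuousMap.const (Torus (k - 1)) (foxSpaceBase n))
  have hpt : ∀ g : C(Torus (k - 1), FoxSpace m), Pr (Pi g) = g := fun g => by
    show r.comp (i.comp g) = g
    rw [← ContinuousMap.comp_assoc, hri, ContinuousMap.id_comp]
  have hsplit : ρ.comp φ = MonoidHom.id (FoxTau k (FoxSpace m) (foxSpaceBase m)) := by
    refine MonoidHom.ext fun a => ?_
    show Path.Homotopic.Quotient.map (Path.Homotopic.Quotient.map a Pi) Pr = a
    refine Quotient.inductionOn a fun q => ?_
    show Path.Homotopic.Quotient.mk ((q.map Pi.continuous).map Pr.continuous) =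
      Path.Homotopic.Quotient.mk q
    rw [Path.map_map]
    refine congrArg _ ?_
    ext t x
    exact DFunLike.congr_fun (hpt (q t)) x
  refine ⟨φ, ρ, hsplit, fun a b hab' => ?_⟩
  have h1 : ρ (φ a) = ρ (φ b) := congrArg ρ hab'
  have h2a := DFunLike.congr_fun hsplit a
  have h2b := DFunLike.congr_fun hsplit b
  simp only [MonoidHom.comp_apply, MonoidHom.id_apply] at h2a h2b
  rwa [h2a, h2b] at h1
end

section
/- Let W be a well-pointed space and n > 1. Write P_{n−1}(W) = W^{n−1}/W^{n−2} for the pinched space and 𝔉̂_k(W) = Σ(W^{k−1} ⊔ ∗). Then there is a pointed homotopy equivalence 𝔉̂_n(W) ≃ ΣP_{n−1}(W) ∨ 𝔉̂_{n−1}(W). -/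
/-!
STATEMENT 11: Let `W` be a well-pointed space and `n > 1` (written `n = m + 2`).
Writing `P_{n−1}(W) = W^{n−1}/W^{n−2}` for the pinched space (`W^{n−2} ⊂ W^{n−1}` via
the basepoint in the last coordinate) and `𝔉̂_k(W) = Σ(W^{k−1} ⊔ ∗)`, there is a
pointed homotopy equivalence `𝔉̂_n(W) ≃ ΣP_{n−1}(W) ∨ 𝔉̂_{n−1}(W)`.
-/

open ContinuousMap Topology

/-- `(W, w₀)` is well-pointed: the inclusion `{w₀} ↪ W` has the homotopy extension
property. -/
def WellPointed.{u, v} (W : Type u) [TopologicalSpace W] (w₀ : W) : Prop :=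
  ∀ (Z : Type v) (_ : TopologicalSpace Z) (f : C(W, Z)) (g : C(unitInterval, Z)),
    g 0 = f w₀ →
    ∃ G : C(W × unitInterval, Z), (∀ w, G (w, 0) = f w) ∧ ∀ t, G (w₀, t) = g t

/-- The relation generating the wedge: both basepoints are identified. -/
def WedgeRel (X : Type u) (Y : Type u) (x₀ : X) (y₀ : Y) (p q : X ⊕ Y) : Prop :=
  (p = Sum.inl x₀ ∨ p = Sum.inr y₀) ∧ (q = Sum.inl x₀ ∨ q = Sum.inr y₀)

/-- The wedge (one-point union) `X ∨ Y` of pointed spaces `(X,x₀)` and `(Y,y₀)`. -/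
def Wedge (X : Type u) (Y : Type u) [TopologicalSpace X] [TopologicalSpace Y]
    (x₀ : X) (y₀ : Y) : Type u :=
  Quot (WedgeRel X Y x₀ y₀)

instance (X Y : Type u) [TopologicalSpace X] [TopologicalSpace Y] (x₀ : X) (y₀ : Y) :
    TopologicalSpace (Wedge X Y x₀ y₀) :=
  instTopologicalSpaceQuot

/-- Basepoint of the wedge. -/
def wedgeBase (X Y : Type u) [TopologicalSpace X] [TopologicalSpace Y] (x₀ : X) (y₀ : Y) :
    Wedge X Y x₀ y₀ :=
  Quot.mk _ (Sum.inl x₀)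

/-- `(X,x₀)` and `(Y,y₀)` are pointed homotopy equivalent. -/
def PtdHomotopyEquiv (X : Type u) (Y : Type u) [TopologicalSpace X] [TopologicalSpace Y]
    (x₀ : X) (y₀ : Y) : Prop :=
  ∃ (f : C(X, Y)) (g : C(Y, X)), f x₀ = y₀ ∧ g y₀ = x₀ ∧
    (g.comp f).HomotopicRel (ContinuousMap.id X) {x₀} ∧
    (f.comp g).HomotopicRel (ContinuousMap.id Y) {y₀}

variable (W : Type u) [TopologicalSpace W] (w₀ : W)

/-- The relation generating the pinched space `P_{k+1}(W) = W^{k+1}/W^k`, where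
`W^k ⊂ W^{k+1}` via the basepoint in the last coordinate. -/
def PinchRel (k : ℕ) (p q : Fin (k + 1) → W) : Prop :=
  p (Fin.last k) = w₀ ∧ q (Fin.last k) = w₀

/-- The pinched space `P_{k+1}(W) = W^{k+1}/W^k`. -/
def Pinched (k : ℕ) : Type u := Quot (PinchRel W w₀ k)

instance (k : ℕ) : TopologicalSpace (Pinched W w₀ k) := instTopologicalSpaceQuot

/-- Basepoint of the pinched space. -/
def pinchedBase (k : ℕ) : Pinched W w₀ k := Quot.mk _ (fun _ => w₀)

/-- `𝔉̂_{k+1}(W) = Σ(W^k ⊔ ∗)`. -/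
def FHat (k : ℕ) : Type u := Susp ((Fin k → W) ⊕ Unit) (Sum.inr ())

instance (k : ℕ) : TopologicalSpace (FHat W k) := by unfold FHat; infer_instance

/-- Basepoint of `𝔉̂_{k+1}(W)`. -/
def fHatBase (k : ℕ) : FHat W k := suspBase _ (Sum.inr ())

/-! ### Auxiliary development for the proof -/

attribute [reducible] Susp FHat Wedge Pinched
attribute [instance] instTopologicalSpaceSusp instTopologicalSpaceWedge
attribute [instance] instTopologicalSpacePinched instTopologicalSpaceFHat

noncomputable section

open unitInterval Set

/-- Clamp a real number into the unit interval. -/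
def jclamp (r : ℝ) : unitInterval := Set.projIcc 0 1 zero_le_one r

lemma jclamp_continuous : Continuous jclamp := continuous_projIcc (h := zero_le_one)

lemma jclamp_coe {r : ℝ} (h0 : 0 ≤ r) (h1 : r ≤ 1) : ((jclamp r : unitInterval) : ℝ) = r := by
  simp only [jclamp, coe_projIcc]
  rw [min_eq_right h1, max_eq_right h0]

lemma jclamp_eq_zero {r : ℝ} (h : r ≤ 0) : jclamp r = 0 := by
  apply Subtype.ext
  show max 0 (min 1 r) = 0
  rw [min_eq_right (h.trans zero_le_one), max_eq_left h]

lemma jclamp_eq_one {r : ℝ} (h : 1 ≤ r) : jclamp r = 1 := by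
  apply Subtype.ext
  show max 0 (min 1 r) = 1
  rw [min_eq_left h, max_eq_right zero_le_one]

lemma jclamp_coe_self (t : unitInterval) : jclamp (t : ℝ) = t :=
  Set.projIcc_val zero_le_one t

/-- Collapsed points in a reduced suspension are the basepoint. -/
lemma mk_eq_suspBase {α : Type u} [TopologicalSpace α] {a₀ : α} {p : α × unitInterval}
    (h : suspCollapsed α a₀ p) : (Quot.mk (SuspRel α a₀) p : Susp α a₀) = suspBase α a₀ :=
  Quot.sound ⟨h, Or.inl rfl⟩

lemma mk_eq_suspBase₀ {α : Type u} [TopologicalSpace α] {a₀ : α} (z : α) :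
    (Quot.mk (SuspRel α a₀) (z, 0) : Susp α a₀) = suspBase α a₀ :=
  mk_eq_suspBase (Or.inl rfl)

lemma mk_eq_suspBase₁ {α : Type u} [TopologicalSpace α] {a₀ : α} (z : α) :
    (Quot.mk (SuspRel α a₀) (z, 1) : Susp α a₀) = suspBase α a₀ :=
  mk_eq_suspBase (Or.inr (Or.inl rfl))

lemma mk_eq_suspBaseB {α : Type u} [TopologicalSpace α] {a₀ : α} (t : unitInterval) :
    (Quot.mk (SuspRel α a₀) (a₀, t) : Susp α a₀) = suspBase α a₀ :=
  mk_eq_suspBase (Or.inr (Or.inr rfl))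

section Dev

variable (m : ℕ)

omit [TopologicalSpace W] in
lemma mk_eq_pinchedBase {x : Fin (m+1) → W} (h : x (Fin.last m) = w₀) :
    (Quot.mk (PinchRel W w₀ m) x : Pinched W w₀ m) = pinchedBase W w₀ m :=
  Quot.sound ⟨h, rfl⟩

/- continuity helpers for `Fin.init` / `Fin.snoc` -/
lemma continuous_finInit : Continuous (Fin.init : (Fin (m+1) → W) → (Fin m → W)) :=
  continuous_pi fun i => continuous_apply _

lemma continuous_finSnoc {α : Type*} [TopologicalSpace α] {f : α → Fin m → W} {g : α → W}
    (hf : Continuous f) (hg : Continuous g) :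
    Continuous fun z => (Fin.snoc (f z) (g z) : Fin (m+1) → W) := by
  refine continuous_pi fun i => ?_
  simp only [Fin.snoc]
  split
  · exact (continuous_apply _).comp hf
  · exact hg

end Dev

/-! ### The deformation data coming from well-pointedness -/

section UV

variable (hW : WellPointed.{u, u} W w₀)

lemma exists_uvmap (hW : WellPointed.{u, u} W w₀) :
    ∃ G : C(W × unitInterval, {p : W × unitInterval // p.2 = 0 ∨ p.1 = w₀}),
      (∀ w, G (w, 0) = ⟨(w, 0), Or.inl rfl⟩) ∧ ∀ t, G (w₀, t) = ⟨(w₀, t), Or.inr rfl⟩ := by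
  obtain ⟨G, h1, h2⟩ := hW {p : W × unitInterval // p.2 = 0 ∨ p.1 = w₀} _
    ⟨fun w => ⟨(w, 0), Or.inl rfl⟩, by
      refine Continuous.subtype_mk ?_ _
      exact continuous_id.prodMk continuous_const⟩
    ⟨fun t => ⟨(w₀, t), Or.inr rfl⟩, by
      refine Continuous.subtype_mk ?_ _
      exact continuous_const.prodMk continuous_id⟩ rfl
  exact ⟨G, h1, h2⟩

/-- The deformation `W × I → W`. -/
def uF (w : W) (t : unitInterval) : W := (((exists_uvmap W w₀ hW).choose (w, t) : _) : W × unitInterval).1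

/-- The associated time deformation `W × I → I`. -/
def vF (w : W) (t : unitInterval) : unitInterval :=
  (((exists_uvmap W w₀ hW).choose (w, t) : _) : W × unitInterval).2

lemma uF_continuous : Continuous fun p : W × unitInterval => uF W w₀ hW p.1 p.2 :=
  (continuous_fst.comp (continuous_subtype_val.comp
    (exists_uvmap W w₀ hW).choose.continuous))

lemma vF_continuous : Continuous fun p : W × unitInterval => vF W w₀ hW p.1 p.2 :=
  (continuous_snd.comp (continuous_subtype_val.comp
    (exists_uvmap W w₀ hW).choose.continuous))

lemma uF_zero (w : W) : uF W w₀ hW w 0 = w := by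
  simp only [uF]; rw [(exists_uvmap W w₀ hW).choose_spec.1 w]

lemma vF_zero (w : W) : vF W w₀ hW w 0 = 0 := by
  simp only [vF]; rw [(exists_uvmap W w₀ hW).choose_spec.1 w]

lemma uF_base (t : unitInterval) : uF W w₀ hW w₀ t = w₀ := by
  simp only [uF]; rw [(exists_uvmap W w₀ hW).choose_spec.2 t]

lemma vF_base (t : unitInterval) : vF W w₀ hW w₀ t = t := by
  simp only [vF]; rw [(exists_uvmap W w₀ hW).choose_spec.2 t]

lemma uv_dichotomy (w : W) (t : unitInterval) :
    vF W w₀ hW w t = 0 ∨ uF W w₀ hW w t = w₀ :=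
  ((exists_uvmap W w₀ hW).choose (w, t)).2

end UV

/-! ### The spaces and basic maps -/

section Core

variable (m : ℕ)

/-- `W^m ⊔ ∗`, the raw space under `𝔉̂_{m+1}(W)`. -/
abbrev XPt := (Fin (m+1) → W) ⊕ Unit
abbrev APt := (Fin m → W) ⊕ Unit
abbrev SXt := Susp ((Fin (m+1) → W) ⊕ Unit) (Sum.inr () : XPt W m)
abbrev SAt := Susp ((Fin m → W) ⊕ Unit) (Sum.inr () : APt W m)
abbrev SPt := Susp (Pinched W w₀ m) (pinchedBase W w₀ m)
abbrev WdT := Wedge (SPt W w₀ m) (SAt W m)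
    (suspBase (Pinched W w₀ m) (pinchedBase W w₀ m)) (fHatBase W m)

/-- collapse `X ⊔ ∗ → X/A`. -/
def qhat : XPt W m → Pinched W w₀ m :=
  Sum.elim (Quot.mk _) fun _ => pinchedBase W w₀ m

lemma qhat_continuous : Continuous (qhat W w₀ m) :=
  continuous_quot_mk.sumElim continuous_const

/-- inclusion `A ⊔ ∗ → X ⊔ ∗`. -/
def ihat : APt W m → XPt W m :=
  Sum.elim (fun a => Sum.inl (Fin.snoc a w₀)) Sum.inr

lemma ihat_continuous : Continuous (ihat W w₀ m) :=
  (continuous_inl.comp (continuous_finSnoc W m continuous_id continuous_const)).sumElim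
    continuous_inr

/-- retraction `X ⊔ ∗ → A ⊔ ∗`. -/
def rhat : XPt W m → APt W m :=
  Sum.elim (fun x => Sum.inl (Fin.init x)) Sum.inr

lemma rhat_continuous : Continuous (rhat W m) :=
  (continuous_inl.comp (continuous_finInit W m)).sumElim continuous_inr

/-! basepoint lemmas in the wedge -/

lemma wedge_inl_base {pt : Pinched W w₀ m × unitInterval}
    (h : suspCollapsed (Pinched W w₀ m) (pinchedBase W w₀ m) pt) :
    (Quot.mk _ (Sum.inl (Quot.mk _ pt)) : WdT W w₀ m) =
      wedgeBase (SPt W w₀ m) (SAt W m) (suspBase _ _) (fHatBase W m) := by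
  rw [mk_eq_suspBase h]; rfl

lemma wedge_inl_base' {sp : SPt W w₀ m}
    (h : sp = suspBase (Pinched W w₀ m) (pinchedBase W w₀ m)) :
    (Quot.mk _ (Sum.inl sp) : WdT W w₀ m) =
      wedgeBase (SPt W w₀ m) (SAt W m) (suspBase _ _) (fHatBase W m) := by
  rw [h]; rfl

lemma wedge_inr_base {pt : APt W m × unitInterval}
    (h : suspCollapsed (APt W m) (Sum.inr ()) pt) :
    (Quot.mk _ (Sum.inr (Quot.mk _ pt)) : WdT W w₀ m) =
      wedgeBase (SPt W w₀ m) (SAt W m) (suspBase _ _) (fHatBase W m) := by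
  rw [mk_eq_suspBase h]
  exact Quot.sound ⟨Or.inr rfl, Or.inl rfl⟩

/-! ### The forward map `F` -/

/-- raw version of the forward map. -/
def Fraw (p : XPt W m × unitInterval) : WdT W w₀ m :=
  if 2 * (p.2 : ℝ) ≤ 1 then
    Quot.mk _ (Sum.inl (Quot.mk _ (qhat W w₀ m p.1, jclamp (2 * p.2))))
  else
    Quot.mk _ (Sum.inr (Quot.mk _ (rhat W m p.1, jclamp (2 * p.2 - 1))))

lemma Fraw_continuous : Continuous (Fraw W w₀ m) := by
  refine Continuous.if_le ?_ ?_ ((continuous_const.mul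
    (continuous_subtype_val.comp continuous_snd))) continuous_const ?_
  · exact continuous_quot_mk.comp (continuous_inl.comp (continuous_quot_mk.comp
      (((qhat_continuous W w₀ m).comp continuous_fst).prodMk
        (jclamp_continuous.comp (continuous_const.mul
          (continuous_subtype_val.comp continuous_snd))))))
  · exact continuous_quot_mk.comp (continuous_inr.comp (continuous_quot_mk.comp
      (((rhat_continuous W m).comp continuous_fst).prodMk
        (jclamp_continuous.comp ((continuous_const.mul
          (continuous_subtype_val.comp continuous_snd)).sub continuous_const)))))
  · intro p hp
    rw [hp, jclamp_eq_one le_rfl, jclamp_eq_zero (by linarith)]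
    rw [wedge_inl_base W w₀ m (Or.inr (Or.inl rfl)),
      wedge_inr_base W w₀ m (Or.inl rfl)]

lemma Fraw_collapsed {p : XPt W m × unitInterval}
    (h : suspCollapsed (XPt W m) (Sum.inr ()) p) :
    Fraw W w₀ m p = wedgeBase (SPt W w₀ m) (SAt W m) (suspBase _ _) (fHatBase W m) := by
  rcases h with h | h | h
  · rw [Fraw, if_pos (by rw [h]; norm_num)]
    exact wedge_inl_base W w₀ m (Or.inl (by rw [h]; exact jclamp_eq_zero (by norm_num)))
  · rw [Fraw, if_neg (by rw [h]; norm_num)]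
    exact wedge_inr_base W w₀ m (Or.inr (Or.inl (by rw [h]; exact jclamp_eq_one (by norm_num))))
  · rw [Fraw]
    split_ifs
    · exact wedge_inl_base W w₀ m (Or.inr (Or.inr (by rw [h]; rfl)))
    · exact wedge_inr_base W w₀ m (Or.inr (Or.inr (by rw [h]; rfl)))

/-- The forward map `F : 𝔉̂_{m+2}(W) → ΣP ∨ 𝔉̂_{m+1}(W)`. -/
def Fc : C(SXt W m, WdT W w₀ m) :=
  ⟨Quot.lift (Fraw W w₀ m) (fun p q hpq => by
      rw [Fraw_collapsed W w₀ m hpq.1, Fraw_collapsed W w₀ m hpq.2]),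
    continuous_quot_lift _ (Fraw_continuous W w₀ m)⟩

/-! ### The homotopy section `s : ΣP → 𝔉̂_{m+2}(W)` -/

variable (hW : WellPointed.{u, u} W w₀)

/-- raw version of the section on representatives. -/
def sraw (p : (Fin (m+1) → W) × unitInterval) : SXt W m :=
  if 2 * (p.2 : ℝ) ≤ 1 then
    Quot.mk _ (Sum.inl (Fin.snoc (Fin.init p.1) (uF W w₀ hW (p.1 (Fin.last m)) 1)),
      jclamp (2 * p.2 * (1 - vF W w₀ hW (p.1 (Fin.last m)) 1)))
  else
    Quot.mk _ (Sum.inl (Fin.snoc (Fin.init p.1) w₀),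
      jclamp ((2 - 2 * p.2) * (1 - vF W w₀ hW (p.1 (Fin.last m)) 1)))

lemma sraw_continuous : Continuous (sraw W w₀ m hW) := by
  have hpair : Continuous fun p : (Fin (m+1) → W) × unitInterval =>
      ((p.1 (Fin.last m), (1 : unitInterval)) : W × unitInterval) :=
    ((continuous_apply _).comp continuous_fst).prodMk continuous_const
  have hu : Continuous fun p : (Fin (m+1) → W) × unitInterval =>
      uF W w₀ hW (p.1 (Fin.last m)) 1 := by
    exact (uF_continuous W w₀ hW).comp hpair
  have hv : Continuous fun p : (Fin (m+1) → W) × unitInterval =>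
      ((vF W w₀ hW (p.1 (Fin.last m)) 1 : unitInterval) : ℝ) := by
    exact continuous_subtype_val.comp ((vF_continuous W w₀ hW).comp hpair)
  have ht : Continuous fun p : (Fin (m+1) → W) × unitInterval => ((p.2 : unitInterval) : ℝ) :=
    continuous_subtype_val.comp continuous_snd
  refine Continuous.if_le ?_ ?_ (continuous_const.mul ht) continuous_const ?_
  · exact continuous_quot_mk.comp ((continuous_inl.comp
      (continuous_finSnoc W m ((continuous_finInit W m).comp continuous_fst) hu)).prodMk
      (jclamp_continuous.comp ((continuous_const.mul ht).mul
        (continuous_const.sub hv))))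
  · exact continuous_quot_mk.comp ((continuous_inl.comp
      (continuous_finSnoc W m ((continuous_finInit W m).comp continuous_fst)
        continuous_const)).prodMk
      (jclamp_continuous.comp ((continuous_const.sub (continuous_const.mul ht)).mul
        (continuous_const.sub hv))))
  · intro p hp
    rcases uv_dichotomy W w₀ hW (p.1 (Fin.last m)) 1 with h | h
    · have hh : (1 : ℝ) - vF W w₀ hW (p.1 (Fin.last m)) 1 = 1 := by rw [h]; simp
      rw [hp, hh, mul_one, mul_one]
      rw [jclamp_eq_one le_rfl, jclamp_eq_one (by norm_num)]
      rw [mk_eq_suspBase₁, mk_eq_suspBase₁]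
    · rw [h, hp, show (2:ℝ) - 1 = 1 by norm_num]

lemma sraw_last_base {x : Fin (m+1) → W} (h : x (Fin.last m) = w₀) (t : unitInterval) :
    sraw W w₀ m hW (x, t) = suspBase _ (Sum.inr () : XPt W m) := by
  have hv : ((vF W w₀ hW (x (Fin.last m)) 1 : unitInterval) : ℝ) = 1 := by
    rw [h, vF_base]; exact Set.Icc.coe_one
  rw [sraw]
  split_ifs
  · rw [hv]
    exact mk_eq_suspBase (Or.inl (by rw [sub_self, mul_zero]; exact jclamp_eq_zero le_rfl))
  · rw [hv]
    exact mk_eq_suspBase (Or.inl (by rw [sub_self, mul_zero]; exact jclamp_eq_zero le_rfl))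

lemma sraw_zero (x : Fin (m+1) → W) :
    sraw W w₀ m hW (x, 0) = suspBase _ (Sum.inr () : XPt W m) := by
  rw [sraw, if_pos (by norm_num)]
  exact mk_eq_suspBase (Or.inl (by
    rw [Set.Icc.coe_zero, mul_zero, zero_mul]; exact jclamp_eq_zero le_rfl))

lemma sraw_one (x : Fin (m+1) → W) :
    sraw W w₀ m hW (x, 1) = suspBase _ (Sum.inr () : XPt W m) := by
  rw [sraw, if_neg (by rw [Set.Icc.coe_one]; norm_num)]
  exact mk_eq_suspBase (Or.inl (by
    rw [Set.Icc.coe_one]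
    rw [show (2 : ℝ) - 2 * 1 = 0 by ring, zero_mul]; exact jclamp_eq_zero le_rfl))

/-- the section on `P × I`. -/
def sPI (pt : Pinched W w₀ m × unitInterval) : SXt W m :=
  Quot.lift (fun x => sraw W w₀ m hW (x, pt.2))
    (fun x y hxy => by
      show sraw W w₀ m hW (x, pt.2) = sraw W w₀ m hW (y, pt.2)
      rw [sraw_last_base W w₀ m hW hxy.1, sraw_last_base W w₀ m hW hxy.2]) pt.1

lemma sPI_continuous : Continuous (sPI W w₀ m hW) := by
  have : Continuous fun p : (Fin (m+1) → W) × unitInterval =>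
      sPI W w₀ m hW (Quot.mk _ p.1, p.2) := sraw_continuous W w₀ m hW
  exact isQuotientMap_quot_mk.continuous_lift_prod_left this

lemma sPI_collapsed {pt : Pinched W w₀ m × unitInterval}
    (h : suspCollapsed (Pinched W w₀ m) (pinchedBase W w₀ m) pt) :
    sPI W w₀ m hW pt = suspBase _ (Sum.inr () : XPt W m) := by
  obtain ⟨p, τ⟩ := pt
  rcases h with h | h | h
  · cases h
    induction p using Quot.ind with
    | _ x => exact sraw_zero W w₀ m hW x
  · cases h
    induction p using Quot.ind with
    | _ x => exact sraw_one W w₀ m hW x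
  · cases h
    exact sraw_last_base W w₀ m hW rfl τ

/-- The homotopy section `s : ΣP → 𝔉̂_{m+2}(W)`. -/
def sC : C(SPt W w₀ m, SXt W m) :=
  ⟨Quot.lift (sPI W w₀ m hW) (fun p q hpq => by
      rw [sPI_collapsed W w₀ m hW hpq.1, sPI_collapsed W w₀ m hW hpq.2]),
    continuous_quot_lift _ (sPI_continuous W w₀ m hW)⟩

/-! ### `Σi : 𝔉̂_{m+1}(W) → 𝔉̂_{m+2}(W)` and the inverse map `G` -/

def iraw (p : APt W m × unitInterval) : SXt W m := Quot.mk _ (ihat W w₀ m p.1, p.2)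

lemma iraw_collapsed {p : APt W m × unitInterval}
    (h : suspCollapsed (APt W m) (Sum.inr ()) p) :
    iraw W w₀ m p = suspBase _ (Sum.inr () : XPt W m) := by
  rcases h with h | h | h
  · exact mk_eq_suspBase (Or.inl h)
  · exact mk_eq_suspBase (Or.inr (Or.inl h))
  · exact mk_eq_suspBase (Or.inr (Or.inr (by rw [h]; rfl)))

def iC : C(SAt W m, SXt W m) :=
  ⟨Quot.lift (iraw W w₀ m) (fun p q hpq => by
      rw [iraw_collapsed W w₀ m hpq.1, iraw_collapsed W w₀ m hpq.2]),
    continuous_quot_lift _ (continuous_quot_mk.comp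
      (((ihat_continuous W w₀ m).comp continuous_fst).prodMk continuous_snd))⟩

lemma sC_base : sC W w₀ m hW (suspBase _ _) = suspBase _ (Sum.inr () : XPt W m) := by
  show sPI W w₀ m hW (pinchedBase W w₀ m, 0) = _
  exact sPI_collapsed W w₀ m hW (Or.inl rfl)

lemma iC_base : iC W w₀ m (fHatBase W m) = suspBase _ (Sum.inr () : XPt W m) := by
  show iraw W w₀ m (Sum.inr (), 0) = _
  exact iraw_collapsed W w₀ m (Or.inl rfl)

/-- The inverse map `G : ΣP ∨ 𝔉̂_{m+1}(W) → 𝔉̂_{m+2}(W)`. -/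
def Gc : C(WdT W w₀ m, SXt W m) :=
  ⟨Quot.lift (Sum.elim (fun sp => sC W w₀ m hW sp) (fun sa => iC W w₀ m sa))
    (fun p q hpq => by
      have hval : ∀ z, (z = Sum.inl (suspBase (Pinched W w₀ m) (pinchedBase W w₀ m)) ∨
          z = Sum.inr (fHatBase W m)) →
          Sum.elim (fun sp => sC W w₀ m hW sp) (fun sa => iC W w₀ m sa) z =
            suspBase _ (Sum.inr () : XPt W m) := by
        rintro z (rfl | rfl)
        · exact sC_base W w₀ m hW
        · exact iC_base W w₀ m
      rw [hval p hpq.1, hval q hpq.2]),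
    continuous_quot_lift _ ((sC W w₀ m hW).continuous.sumElim (iC W w₀ m).continuous)⟩

lemma Fc_base : Fc W w₀ m (suspBase _ (Sum.inr () : XPt W m)) =
    wedgeBase (SPt W w₀ m) (SAt W m) (suspBase _ _) (fHatBase W m) := by
  show Fraw W w₀ m (Sum.inr (), 0) = _
  exact Fraw_collapsed W w₀ m (Or.inl rfl)

lemma Gc_base : Gc W w₀ m hW (wedgeBase (SPt W w₀ m) (SAt W m) (suspBase _ _) (fHatBase W m)) =
    suspBase _ (Sum.inr () : XPt W m) := by
  show sC W w₀ m hW (suspBase _ _) = _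
  exact sC_base W w₀ m hW

end Core

/-! ### Homotopy-building infrastructure -/

section Builders

/-- Build a relative homotopy between maps on a quotient of `α × I` from a
homotopy of raw maps. -/
def quotHomotopyRel {α Z : Type u} [TopologicalSpace α] [TopologicalSpace Z]
    {r : α × unitInterval → α × unitInterval → Prop}
    {f₀ f₁ : C(Quot r, Z)} {b : Quot r}
    (χ : unitInterval → α × unitInterval → Z)
    (hcont : Continuous fun q : unitInterval × (α × unitInterval) => χ q.1 q.2)
    (hresp : ∀ s p q, r p q → χ s p = χ s q)
    (h0 : ∀ p, χ 0 p = f₀ (Quot.mk r p))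
    (h1 : ∀ p, χ 1 p = f₁ (Quot.mk r p))
    (hb : ∀ s, Quot.lift (χ s) (hresp s) b = f₀ b) :
    ContinuousMap.HomotopyRel f₀ f₁ {b} where
  toFun := fun q => Quot.lift (χ q.1) (hresp q.1) q.2
  continuous_toFun := isQuotientMap_quot_mk.continuous_lift_prod_right hcont
  map_zero_left := by
    intro x
    induction x using Quot.ind with
    | _ p => exact h0 p
  map_one_left := by
    intro x
    induction x using Quot.ind with
    | _ p => exact h1 p
  prop' := by
    intro s x hx
    rcases hx with rfl
    exact hb s

variable (m : ℕ)

/-- Extend a raw-homotopy on `(Fin (m+1) → W) × I` by the basepoint on the `Unit`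
summand. -/
def extX {Z : Type u} [TopologicalSpace Z] (z₀ : Z)
    (χ : unitInterval → ((Fin (m+1) → W) × unitInterval) → Z) :
    unitInterval → (XPt W m × unitInterval) → Z :=
  fun s p => Sum.elim (fun x => χ s (x, p.2)) (fun _ => z₀) p.1

lemma extX_continuous {Z : Type u} [TopologicalSpace Z] (z₀ : Z)
    (χ : unitInterval → ((Fin (m+1) → W) × unitInterval) → Z)
    (hcont : Continuous fun q : unitInterval × ((Fin (m+1) → W) × unitInterval) =>
      χ q.1 q.2) :
    Continuous fun q : unitInterval × (XPt W m × unitInterval) => extX W m z₀ χ q.1 q.2 := by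
  have key : ∀ q : unitInterval × (XPt W m × unitInterval), extX W m z₀ χ q.1 q.2 =
      Sum.elim
        (fun z : (Fin (m+1) → W) × (unitInterval × unitInterval) => χ z.2.1 (z.1, z.2.2))
        (fun _ : Unit × (unitInterval × unitInterval) => z₀)
        (Homeomorph.sumProdDistrib (q.2.1, (q.1, q.2.2))) := by
    rintro ⟨s, ⟨z, t⟩⟩
    cases z <;> rfl
  rw [funext key]
  refine Continuous.comp ?_ ?_
  · refine Continuous.sumElim ?_ continuous_const
    exact hcont.comp (show Continuous fun z : (Fin (m+1) → W) × (unitInterval × unitInterval) =>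
      ((z.2.1, (z.1, z.2.2)) : unitInterval × ((Fin (m+1) → W) × unitInterval)) from
      (continuous_fst.comp continuous_snd).prodMk
        (continuous_fst.prodMk (continuous_snd.comp continuous_snd)))
  · exact (Homeomorph.continuous
      (Homeomorph.sumProdDistrib :
        ((Fin (m+1) → W) ⊕ Unit) × (unitInterval × unitInterval) ≃ₜ _)).comp
      ((continuous_fst.comp continuous_snd).prodMk
        (continuous_fst.prodMk (continuous_snd.comp continuous_snd)))

/-- Descend a raw-homotopy on `(Fin (m+1) → W) × I` to `P_{m+1}(W) × I` when it kills
the subspace `W^m`. -/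
def liftP {Z : Type u} [TopologicalSpace Z] {z₀ : Z}
    (χ : unitInterval → ((Fin (m+1) → W) × unitInterval) → Z)
    (hlast : ∀ s t x, x (Fin.last m) = w₀ → χ s (x, t) = z₀) :
    unitInterval → (Pinched W w₀ m × unitInterval) → Z :=
  fun s pt => Quot.lift (fun x => χ s (x, pt.2)) (fun x y hxy => by
    show χ s (x, pt.2) = χ s (y, pt.2)
    rw [hlast s pt.2 x hxy.1, hlast s pt.2 y hxy.2]) pt.1

lemma liftP_continuous {Z : Type u} [TopologicalSpace Z] {z₀ : Z}
    (χ : unitInterval → ((Fin (m+1) → W) × unitInterval) → Z)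
    (hlast : ∀ s t x, x (Fin.last m) = w₀ → χ s (x, t) = z₀)
    (hcont : Continuous fun q : unitInterval × ((Fin (m+1) → W) × unitInterval) =>
      χ q.1 q.2) :
    Continuous fun q : unitInterval × (Pinched W w₀ m × unitInterval) =>
      liftP W w₀ m χ hlast q.1 q.2 := by
  have h1 : Continuous fun q : (unitInterval × unitInterval) × Pinched W w₀ m =>
      liftP W w₀ m χ hlast q.1.1 (q.2, q.1.2) := by
    apply isQuotientMap_quot_mk.continuous_lift_prod_right
    exact hcont.comp ((continuous_fst.comp continuous_fst).prodMk
      (continuous_snd.prodMk (continuous_snd.comp continuous_fst)))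
  exact h1.comp ((continuous_fst.prodMk (continuous_snd.comp continuous_snd)).prodMk
    (continuous_fst.comp continuous_snd))

/-- Wedge inclusions. -/
def inlC : C(SPt W w₀ m, WdT W w₀ m) :=
  ⟨fun sp => Quot.mk _ (Sum.inl sp), continuous_quot_mk.comp continuous_inl⟩

def inrC : C(SAt W m, WdT W w₀ m) :=
  ⟨fun sa => Quot.mk _ (Sum.inr sa), continuous_quot_mk.comp continuous_inr⟩

lemma inlC_base : inlC W w₀ m (suspBase _ _) =
    wedgeBase (SPt W w₀ m) (SAt W m) (suspBase _ _) (fHatBase W m) := rfl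

lemma inrC_base : inrC W w₀ m (fHatBase W m) =
    wedgeBase (SPt W w₀ m) (SAt W m) (suspBase _ _) (fHatBase W m) :=
  Quot.sound ⟨Or.inr rfl, Or.inl rfl⟩

/-- values of glued homotopies at identified points -/
lemma wedgeGlue_val {Z : Type u} [TopologicalSpace Z] {f g : C(WdT W w₀ m, Z)}
    (Hl : ContinuousMap.HomotopyRel (f.comp (inlC W w₀ m)) (g.comp (inlC W w₀ m))
      {suspBase (Pinched W w₀ m) (pinchedBase W w₀ m)})
    (Hr : ContinuousMap.HomotopyRel (f.comp (inrC W w₀ m)) (g.comp (inrC W w₀ m))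
      {fHatBase W m})
    (s : unitInterval) (z : SPt W w₀ m ⊕ SAt W m)
    (hz : z = Sum.inl (suspBase (Pinched W w₀ m) (pinchedBase W w₀ m)) ∨
      z = Sum.inr (fHatBase W m)) :
    Sum.elim (fun sp => Hl (s, sp)) (fun sa => Hr (s, sa)) z =
      f (wedgeBase (SPt W w₀ m) (SAt W m) (suspBase _ _) (fHatBase W m)) := by
  rcases hz with rfl | rfl
  · show Hl (s, suspBase _ _) = _
    rw [Hl.eq_fst s rfl]
    rfl
  · show Hr (s, fHatBase W m) = _
    rw [Hr.eq_fst s rfl]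
    show f (inrC W w₀ m (fHatBase W m)) = _
    rw [inrC_base]

/-- Glue relative homotopies on the two wedge summands. -/
def wedgeHomotopyRel {Z : Type u} [TopologicalSpace Z] {f g : C(WdT W w₀ m, Z)}
    (Hl : ContinuousMap.HomotopyRel (f.comp (inlC W w₀ m)) (g.comp (inlC W w₀ m))
      {suspBase (Pinched W w₀ m) (pinchedBase W w₀ m)})
    (Hr : ContinuousMap.HomotopyRel (f.comp (inrC W w₀ m)) (g.comp (inrC W w₀ m))
      {fHatBase W m}) :
    ContinuousMap.HomotopyRel f g
      {wedgeBase (SPt W w₀ m) (SAt W m) (suspBase _ _) (fHatBase W m)} where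
  toFun := fun q => Quot.lift (Sum.elim (fun sp => Hl (q.1, sp)) (fun sa => Hr (q.1, sa)))
    (fun z z' hzz' => by
      rw [wedgeGlue_val W w₀ m Hl Hr q.1 z hzz'.1, wedgeGlue_val W w₀ m Hl Hr q.1 z' hzz'.2])
    q.2
  continuous_toFun := by
    apply isQuotientMap_quot_mk.continuous_lift_prod_right
    have key : ∀ q : unitInterval × (SPt W w₀ m ⊕ SAt W m),
        Sum.elim (fun sp => Hl (q.1, sp)) (fun sa => Hr (q.1, sa)) q.2 =
        Sum.elim (fun z : SPt W w₀ m × unitInterval => Hl (z.2, z.1))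
          (fun z : SAt W m × unitInterval => Hr (z.2, z.1))
          (Homeomorph.sumProdDistrib (q.2, q.1)) := by
      rintro ⟨s, z⟩
      cases z <;> rfl
    rw [funext key]
    refine Continuous.comp ?_ ?_
    · exact (Hl.continuous.comp (continuous_snd.prodMk continuous_fst)).sumElim
        (Hr.continuous.comp (continuous_snd.prodMk continuous_fst))
    · exact (Homeomorph.continuous
        (Homeomorph.sumProdDistrib :
          (SPt W w₀ m ⊕ SAt W m) × unitInterval ≃ₜ _)).comp
        (continuous_snd.prodMk continuous_fst)
  map_zero_left := by
    intro x
    induction x using Quot.ind with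
    | _ z =>
      cases z with
      | inl sp => exact Hl.apply_zero sp
      | inr sa => exact Hr.apply_zero sa
  map_one_left := by
    intro x
    induction x using Quot.ind with
    | _ z =>
      cases z with
      | inl sp => exact Hl.apply_one sp
      | inr sa => exact Hr.apply_one sa
  prop' := by
    intro s x hx
    rcases hx with rfl
    exact wedgeGlue_val W w₀ m Hl Hr s (Sum.inl (suspBase _ _)) (Or.inl rfl)

end Builders

/-! ### Side 1 : `G ∘ F ≃ id` on `𝔉̂_{m+2}(W)` -/

section SideOne

variable (m : ℕ) (hW : WellPointed.{u, u} W w₀)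

/-- Bundle a collapsed-respecting map on representatives into a self-map of the
suspension. -/
def mkSXMap (h : XPt W m × unitInterval → SXt W m)
    (hcol : ∀ p, suspCollapsed (XPt W m) (Sum.inr ()) p → h p = suspBase _ (Sum.inr () : XPt W m))
    (hc : Continuous h) : C(SXt W m, SXt W m) :=
  ⟨Quot.lift h (fun p q hpq => by rw [hcol p hpq.1, hcol q hpq.2]),
    continuous_quot_lift _ hc⟩

/-- continuity helper: extend a map on `W^{m+1} × I` by the basepoint. -/
lemma extX_continuous' {Z : Type u} [TopologicalSpace Z] (z₀ : Z)
    {h : (Fin (m+1) → W) × unitInterval → Z} (hc : Continuous h) :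
    Continuous fun p : XPt W m × unitInterval =>
      Sum.elim (fun x => h (x, p.2)) (fun _ => z₀) p.1 := by
  have hpair : Continuous fun p : XPt W m × unitInterval =>
      (((0 : unitInterval), p) : unitInterval × (XPt W m × unitInterval)) :=
    continuous_const.prodMk continuous_id
  exact (extX_continuous W m z₀ (fun _ q => h q) (hc.comp continuous_snd)).comp hpair

/-- the value of `G ∘ F` on representatives. -/
def GFraw (p : XPt W m × unitInterval) : SXt W m :=
  Sum.elim (fun x =>
    if 4 * (p.2 : ℝ) ≤ 1 then
      Quot.mk _ (Sum.inl (Fin.snoc (Fin.init x) (uF W w₀ hW (x (Fin.last m)) 1)),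
        jclamp (4 * p.2 * (1 - vF W w₀ hW (x (Fin.last m)) 1)))
    else if 2 * (p.2 : ℝ) ≤ 1 then
      Quot.mk _ (Sum.inl (Fin.snoc (Fin.init x) w₀),
        jclamp ((2 - 4 * p.2) * (1 - vF W w₀ hW (x (Fin.last m)) 1)))
    else
      Quot.mk _ (Sum.inl (Fin.snoc (Fin.init x) w₀), jclamp (2 * p.2 - 1)))
    (fun _ => suspBase _ (Sum.inr () : XPt W m)) p.1

lemma GF_eval (z : XPt W m) (t : unitInterval) :
    Gc W w₀ m hW (Fc W w₀ m (Quot.mk _ (z, t))) = GFraw W w₀ m hW (z, t) := by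
  cases z with
  | inr u =>
    show Gc W w₀ m hW (Fraw W w₀ m (Sum.inr u, t)) = _
    rw [Fraw_collapsed W w₀ m (Or.inr (Or.inr rfl))]
    exact Gc_base W w₀ m hW
  | inl x =>
    show Gc W w₀ m hW (Fraw W w₀ m (Sum.inl x, t)) = _
    have ht0 : (0:ℝ) ≤ (t : ℝ) := t.2.1
    have ht1 : (t : ℝ) ≤ 1 := t.2.2
    by_cases h2 : 2 * (t : ℝ) ≤ 1
    · rw [Fraw, if_pos h2]
      show sraw W w₀ m hW (x, jclamp (2 * t)) = _
      have hj : ((jclamp (2 * (t:ℝ)) : unitInterval) : ℝ) = 2 * t :=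
        jclamp_coe (by linarith) h2
      rw [sraw]
      simp only [GFraw, Sum.elim_inl]
      by_cases h4 : 4 * (t : ℝ) ≤ 1
      · rw [if_pos (by rw [hj]; linarith), if_pos h4]
        show Quot.mk _ _ = Quot.mk _ _
        rw [hj, show (2:ℝ) * (2 * t) * (1 - vF W w₀ hW (x (Fin.last m)) 1) =
          4 * t * (1 - vF W w₀ hW (x (Fin.last m)) 1) by ring]
      · rw [if_neg (by rw [hj]; intro h; exact h4 (by linarith)), if_neg h4, if_pos h2]
        show Quot.mk _ _ = Quot.mk _ _
        rw [hj, show (2:ℝ) - 2 * (2 * t) = 2 - 4 * t by ring]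
    · rw [Fraw, if_neg h2]
      show Quot.mk _ (ihat W w₀ m (Sum.inl (Fin.init x)), jclamp (2 * t - 1)) = _
      simp only [GFraw, Sum.elim_inl]
      rw [if_neg (by intro h; exact h2 (by linarith)), if_neg h2]
      rfl

lemma GFraw_collapsed (p : XPt W m × unitInterval)
    (h : suspCollapsed (XPt W m) (Sum.inr ()) p) :
    GFraw W w₀ m hW p = suspBase _ (Sum.inr () : XPt W m) := by
  obtain ⟨z, t⟩ := p
  rw [← GF_eval W w₀ m hW z t, mk_eq_suspBase h]
  show Gc W w₀ m hW (Fc W w₀ m (suspBase _ _)) = _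
  rw [Fc_base W w₀ m, Gc_base W w₀ m hW]

/-- intermediate map `E1`. -/
def e1raw (p : (Fin (m+1) → W) × unitInterval) : SXt W m :=
  if 4 * (p.2 : ℝ) ≤ 1 then
    Quot.mk _ (Sum.inl p.1, jclamp (4 * p.2))
  else if 2 * (p.2 : ℝ) ≤ 1 then
    Quot.mk _ (Sum.inl (Fin.snoc (Fin.init p.1) w₀), jclamp (2 - 4 * p.2))
  else
    Quot.mk _ (Sum.inl (Fin.snoc (Fin.init p.1) w₀), jclamp (2 * p.2 - 1))

/-- intermediate map `E2`. -/
def e2raw (p : (Fin (m+1) → W) × unitInterval) : SXt W m :=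
  Quot.mk _ (Sum.inl p.1, jclamp (min (4 * p.2) 1))

lemma e1raw_continuous : Continuous (e1raw W w₀ m) := by
  have ht : Continuous fun p : (Fin (m+1) → W) × unitInterval => ((p.2 : unitInterval) : ℝ) :=
    continuous_subtype_val.comp continuous_snd
  have hsnoc : Continuous fun p : (Fin (m+1) → W) × unitInterval =>
      (Fin.snoc (Fin.init p.1) w₀ : Fin (m+1) → W) :=
    continuous_finSnoc W m ((continuous_finInit W m).comp continuous_fst) continuous_const
  refine Continuous.if_le ?_ ?_ (continuous_const.mul ht) continuous_const ?_
  · exact continuous_quot_mk.comp ((continuous_inl.comp continuous_fst).prodMk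
      (jclamp_continuous.comp (continuous_const.mul ht)))
  · refine Continuous.if_le ?_ ?_ (continuous_const.mul ht) continuous_const ?_
    · exact continuous_quot_mk.comp ((continuous_inl.comp hsnoc).prodMk
        (jclamp_continuous.comp (continuous_const.sub (continuous_const.mul ht))))
    · exact continuous_quot_mk.comp ((continuous_inl.comp hsnoc).prodMk
        (jclamp_continuous.comp ((continuous_const.mul ht).sub continuous_const)))
    · intro p hp
      rw [show (2:ℝ) - 4 * p.2 = 0 by linarith, show 2 * (p.2:ℝ) - 1 = 0 by linarith]
  · intro p hp
    rw [if_pos (by linarith : 2 * (p.2:ℝ) ≤ 1),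
      show (2:ℝ) - 4 * p.2 = 1 by linarith, hp, jclamp_eq_one le_rfl]
    rw [mk_eq_suspBase₁, mk_eq_suspBase₁]

lemma e2raw_continuous : Continuous (e2raw W m) := by
  have ht : Continuous fun p : (Fin (m+1) → W) × unitInterval => ((p.2 : unitInterval) : ℝ) :=
    continuous_subtype_val.comp continuous_snd
  exact continuous_quot_mk.comp ((continuous_inl.comp continuous_fst).prodMk
    (jclamp_continuous.comp ((continuous_const.mul ht).min continuous_const)))

lemma e1raw_collapsed (p : (Fin (m+1) → W) × unitInterval) (h : p.2 = 0 ∨ p.2 = 1) :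
    e1raw W w₀ m p = suspBase _ (Sum.inr () : XPt W m) := by
  rcases h with h | h
  · rw [e1raw, if_pos (by rw [h, Set.Icc.coe_zero]; norm_num)]
    exact mk_eq_suspBase (Or.inl (by
      rw [h, Set.Icc.coe_zero, mul_zero]; exact jclamp_eq_zero le_rfl))
  · rw [e1raw, if_neg (by rw [h, Set.Icc.coe_one]; norm_num),
      if_neg (by rw [h, Set.Icc.coe_one]; norm_num)]
    exact mk_eq_suspBase (Or.inr (Or.inl (by
      rw [h, Set.Icc.coe_one]; exact jclamp_eq_one (by norm_num))))

lemma e2raw_collapsed (p : (Fin (m+1) → W) × unitInterval) (h : p.2 = 0 ∨ p.2 = 1) :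
    e2raw W m p = suspBase _ (Sum.inr () : XPt W m) := by
  rcases h with h | h
  · refine mk_eq_suspBase (Or.inl ?_)
    show jclamp (min (4 * (p.2:ℝ)) 1) = 0
    rw [h, Set.Icc.coe_zero, mul_zero, show min (0:ℝ) 1 = 0 by norm_num]
    exact jclamp_eq_zero le_rfl
  · refine mk_eq_suspBase (Or.inr (Or.inl ?_))
    show jclamp (min (4 * (p.2:ℝ)) 1) = 1
    rw [h, Set.Icc.coe_one, mul_one, show min (4:ℝ) 1 = 1 by norm_num]
    exact jclamp_eq_one le_rfl

def E1c : C(SXt W m, SXt W m) :=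
  mkSXMap W m (fun p => Sum.elim (fun x => e1raw W w₀ m (x, p.2))
      (fun _ => suspBase _ (Sum.inr () : XPt W m)) p.1)
    (by
      rintro ⟨z, t⟩ h
      cases z with
      | inr u => rfl
      | inl x =>
        rcases h with h | h | h
        · exact e1raw_collapsed W w₀ m _ (Or.inl h)
        · exact e1raw_collapsed W w₀ m _ (Or.inr h)
        · exact absurd h (by simp))
    (extX_continuous' W m _ (e1raw_continuous W w₀ m))

def E2c : C(SXt W m, SXt W m) :=
  mkSXMap W m (fun p => Sum.elim (fun x => e2raw W m (x, p.2))
      (fun _ => suspBase _ (Sum.inr () : XPt W m)) p.1)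
    (by
      rintro ⟨z, t⟩ h
      cases z with
      | inr u => rfl
      | inl x =>
        rcases h with h | h | h
        · exact e2raw_collapsed W m _ (Or.inl h)
        · exact e2raw_collapsed W m _ (Or.inr h)
        · exact absurd h (by simp))
    (extX_continuous' W m _ (e2raw_continuous W m))

end SideOne

/-! ### Side 1: the homotopies -/

section SideOneHomotopies

variable (m : ℕ) (hW : WellPointed.{u, u} W w₀)

/-- first homotopy: deform the collar parameter back. -/
def chi1raw (s : unitInterval) (q : (Fin (m+1) → W) × unitInterval) : SXt W m :=
  if 4 * (q.2 : ℝ) ≤ 1 then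
    Quot.mk _ (Sum.inl (Fin.snoc (Fin.init q.1)
        (uF W w₀ hW (q.1 (Fin.last m)) (unitInterval.symm s))),
      jclamp (4 * q.2 * (1 - vF W w₀ hW (q.1 (Fin.last m)) (unitInterval.symm s))))
  else if 2 * (q.2 : ℝ) ≤ 1 then
    Quot.mk _ (Sum.inl (Fin.snoc (Fin.init q.1) w₀),
      jclamp ((2 - 4 * q.2) * (1 - vF W w₀ hW (q.1 (Fin.last m)) (unitInterval.symm s))))
  else
    Quot.mk _ (Sum.inl (Fin.snoc (Fin.init q.1) w₀), jclamp (2 * q.2 - 1))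

lemma chi1raw_continuous :
    Continuous fun q : unitInterval × ((Fin (m+1) → W) × unitInterval) =>
      chi1raw W w₀ m hW q.1 q.2 := by
  have ht : Continuous fun q : unitInterval × ((Fin (m+1) → W) × unitInterval) =>
      ((q.2.2 : unitInterval) : ℝ) :=
    continuous_subtype_val.comp (continuous_snd.comp continuous_snd)
  have hpair : Continuous fun q : unitInterval × ((Fin (m+1) → W) × unitInterval) =>
      ((q.2.1 (Fin.last m), unitInterval.symm q.1) : W × unitInterval) :=
    ((continuous_apply _).comp (continuous_fst.comp continuous_snd)).prodMk
      (unitInterval.continuous_symm.comp continuous_fst)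
  have hu : Continuous fun q : unitInterval × ((Fin (m+1) → W) × unitInterval) =>
      uF W w₀ hW (q.2.1 (Fin.last m)) (unitInterval.symm q.1) := by
    exact (uF_continuous W w₀ hW).comp hpair
  have hv : Continuous fun q : unitInterval × ((Fin (m+1) → W) × unitInterval) =>
      ((vF W w₀ hW (q.2.1 (Fin.last m)) (unitInterval.symm q.1) : unitInterval) : ℝ) := by
    exact continuous_subtype_val.comp ((vF_continuous W w₀ hW).comp hpair)
  have hinit : Continuous fun q : unitInterval × ((Fin (m+1) → W) × unitInterval) =>
      Fin.init q.2.1 :=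
    (continuous_finInit W m).comp (continuous_fst.comp continuous_snd)
  refine Continuous.if_le ?_ ?_ (continuous_const.mul ht) continuous_const ?_
  · exact continuous_quot_mk.comp ((continuous_inl.comp
      (continuous_finSnoc W m hinit hu)).prodMk
      (jclamp_continuous.comp ((continuous_const.mul ht).mul (continuous_const.sub hv))))
  · refine Continuous.if_le ?_ ?_ (continuous_const.mul ht) continuous_const ?_
    · exact continuous_quot_mk.comp ((continuous_inl.comp
        (continuous_finSnoc W m hinit continuous_const)).prodMk
        (jclamp_continuous.comp ((continuous_const.sub (continuous_const.mul ht)).mul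
          (continuous_const.sub hv))))
    · exact continuous_quot_mk.comp ((continuous_inl.comp
        (continuous_finSnoc W m hinit continuous_const)).prodMk
        (jclamp_continuous.comp ((continuous_const.mul ht).sub continuous_const)))
    · intro q hq
      rw [show (2:ℝ) - 4 * q.2.2 = 0 by linarith, show 2 * (q.2.2:ℝ) - 1 = 0 by linarith,
        zero_mul]
  · intro q hq
    rw [if_pos (by linarith : 2 * (q.2.2:ℝ) ≤ 1)]
    rw [show (4:ℝ) * q.2.2 * (1 - vF W w₀ hW (q.2.1 (Fin.last m)) (unitInterval.symm q.1)) =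
        1 * (1 - vF W w₀ hW (q.2.1 (Fin.last m)) (unitInterval.symm q.1)) by rw [hq],
      show ((2:ℝ) - 4 * q.2.2) * (1 - vF W w₀ hW (q.2.1 (Fin.last m)) (unitInterval.symm q.1)) =
        1 * (1 - vF W w₀ hW (q.2.1 (Fin.last m)) (unitInterval.symm q.1)) by
          rw [show (2:ℝ) - 4 * q.2.2 = 1 by linarith]]
    rcases uv_dichotomy W w₀ hW (q.2.1 (Fin.last m)) (unitInterval.symm q.1) with h | h
    · rw [h]
      rw [show (1:ℝ) * (1 - ((0 : unitInterval) : ℝ)) = 1 by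
        rw [Set.Icc.coe_zero]; norm_num]
      rw [jclamp_eq_one le_rfl, mk_eq_suspBase₁, mk_eq_suspBase₁]
    · rw [h]

lemma chi1raw_collapsed (s : unitInterval) (x : Fin (m+1) → W) (t : unitInterval)
    (h : t = 0 ∨ t = 1) :
    chi1raw W w₀ m hW s (x, t) = suspBase _ (Sum.inr () : XPt W m) := by
  rcases h with h | h
  · rw [chi1raw, if_pos (by rw [h, Set.Icc.coe_zero]; norm_num)]
    refine mk_eq_suspBase (Or.inl ?_)
    show jclamp (4 * (t:ℝ) * _) = 0
    rw [h, Set.Icc.coe_zero, mul_zero, zero_mul]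
    exact jclamp_eq_zero le_rfl
  · rw [chi1raw, if_neg (by rw [h, Set.Icc.coe_one]; norm_num),
      if_neg (by rw [h, Set.Icc.coe_one]; norm_num)]
    refine mk_eq_suspBase (Or.inr (Or.inl ?_))
    show jclamp (2 * (t:ℝ) - 1) = 1
    rw [h, Set.Icc.coe_one]
    exact jclamp_eq_one (by norm_num)

/-- `Θ1 : G ∘ F ≃ E1`. -/
def theta1 : ContinuousMap.HomotopyRel ((Gc W w₀ m hW).comp (Fc W w₀ m)) (E1c W w₀ m)
    {suspBase _ (Sum.inr () : XPt W m)} := by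
  refine quotHomotopyRel
    (extX W m (suspBase _ (Sum.inr () : XPt W m)) (chi1raw W w₀ m hW))
    (extX_continuous W m _ _ (chi1raw_continuous W w₀ m hW)) ?_ ?_ ?_ ?_
  · rintro s ⟨z, t⟩ ⟨z', t'⟩ ⟨h, h'⟩
    have key : ∀ z'' : XPt W m, ∀ t'' : unitInterval,
        suspCollapsed (XPt W m) (Sum.inr ()) (z'', t'') →
        extX W m (suspBase _ (Sum.inr () : XPt W m)) (chi1raw W w₀ m hW) s (z'', t'') =
          suspBase _ (Sum.inr () : XPt W m) := by
      intro z'' t'' hc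
      cases z'' with
      | inr u => rfl
      | inl x =>
        rcases hc with hc | hc | hc
        · exact chi1raw_collapsed W w₀ m hW s x t'' (Or.inl hc)
        · exact chi1raw_collapsed W w₀ m hW s x t'' (Or.inr hc)
        · exact absurd hc (by simp)
    rw [key z t h, key z' t' h']
  · rintro ⟨z, t⟩
    refine Eq.trans ?_ (GF_eval W w₀ m hW z t).symm
    cases z with
    | inr u => rfl
    | inl x =>
      show chi1raw W w₀ m hW 0 (x, t) = _
      simp only [GFraw, Sum.elim_inl, chi1raw, unitInterval.symm_zero]
  · rintro ⟨z, t⟩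
    cases z with
    | inr u => rfl
    | inl x =>
      show chi1raw W w₀ m hW 1 (x, t) = e1raw W w₀ m (x, t)
      simp only [chi1raw, e1raw, unitInterval.symm_one, uF_zero, vF_zero,
        Set.Icc.coe_zero, sub_zero, mul_one, Fin.snoc_init_self]
  · intro s
    show suspBase _ (Sum.inr () : XPt W m) = ((Gc W w₀ m hW).comp (Fc W w₀ m)) _
    show _ = Gc W w₀ m hW (Fc W w₀ m (suspBase _ (Sum.inr () : XPt W m)))
    rw [Fc_base W w₀ m, Gc_base W w₀ m hW]

/-- second homotopy raw map. -/
def chi2raw (s : unitInterval) (q : (Fin (m+1) → W) × unitInterval) : SXt W m :=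
  if 4 * (q.2 : ℝ) ≤ 1 then
    Quot.mk _ (Sum.inl q.1, jclamp (4 * q.2))
  else if 2 * (q.2 : ℝ) ≤ 1 then
    Quot.mk _ (Sum.inl (Fin.snoc (Fin.init q.1) w₀), jclamp (max (2 - 4 * q.2) s))
  else
    Quot.mk _ (Sum.inl (Fin.snoc (Fin.init q.1) w₀), jclamp (max (2 * q.2 - 1) s))

lemma chi2raw_continuous :
    Continuous fun q : unitInterval × ((Fin (m+1) → W) × unitInterval) =>
      chi2raw W w₀ m q.1 q.2 := by
  have ht : Continuous fun q : unitInterval × ((Fin (m+1) → W) × unitInterval) =>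
      ((q.2.2 : unitInterval) : ℝ) :=
    continuous_subtype_val.comp (continuous_snd.comp continuous_snd)
  have hs : Continuous fun q : unitInterval × ((Fin (m+1) → W) × unitInterval) =>
      ((q.1 : unitInterval) : ℝ) :=
    continuous_subtype_val.comp continuous_fst
  have hsnoc : Continuous fun q : unitInterval × ((Fin (m+1) → W) × unitInterval) =>
      (Fin.snoc (Fin.init q.2.1) w₀ : Fin (m+1) → W) :=
    continuous_finSnoc W m ((continuous_finInit W m).comp
      (continuous_fst.comp continuous_snd)) continuous_const
  refine Continuous.if_le ?_ ?_ (continuous_const.mul ht) continuous_const ?_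
  · exact continuous_quot_mk.comp ((continuous_inl.comp
      (continuous_fst.comp continuous_snd)).prodMk
      (jclamp_continuous.comp (continuous_const.mul ht)))
  · refine Continuous.if_le ?_ ?_ (continuous_const.mul ht) continuous_const ?_
    · exact continuous_quot_mk.comp ((continuous_inl.comp hsnoc).prodMk
        (jclamp_continuous.comp ((continuous_const.sub (continuous_const.mul ht)).max hs)))
    · exact continuous_quot_mk.comp ((continuous_inl.comp hsnoc).prodMk
        (jclamp_continuous.comp (((continuous_const.mul ht).sub continuous_const).max hs)))
    · intro q hq
      rw [show (2:ℝ) - 4 * q.2.2 = 0 by linarith, show 2 * (q.2.2:ℝ) - 1 = 0 by linarith]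
  · intro q hq
    rw [if_pos (by linarith : 2 * (q.2.2:ℝ) ≤ 1),
      show (2:ℝ) - 4 * q.2.2 = 1 by linarith, hq,
      max_eq_left (q.1.2.2 : (q.1 : ℝ) ≤ 1), jclamp_eq_one le_rfl]
    rw [mk_eq_suspBase₁, mk_eq_suspBase₁]

lemma chi2raw_collapsed (s : unitInterval) (x : Fin (m+1) → W) (t : unitInterval)
    (h : t = 0 ∨ t = 1) :
    chi2raw W w₀ m s (x, t) = suspBase _ (Sum.inr () : XPt W m) := by
  rcases h with h | h
  · rw [chi2raw, if_pos (by rw [h, Set.Icc.coe_zero]; norm_num)]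
    refine mk_eq_suspBase (Or.inl ?_)
    show jclamp (4 * (t:ℝ)) = 0
    rw [h, Set.Icc.coe_zero, mul_zero]
    exact jclamp_eq_zero le_rfl
  · rw [chi2raw, if_neg (by rw [h, Set.Icc.coe_one]; norm_num),
      if_neg (by rw [h, Set.Icc.coe_one]; norm_num)]
    refine mk_eq_suspBase (Or.inr (Or.inl ?_))
    show jclamp (max (2 * (t:ℝ) - 1) s) = 1
    rw [h, Set.Icc.coe_one, show (2:ℝ) * 1 - 1 = 1 by norm_num,
      max_eq_left (s.2.2 : (s : ℝ) ≤ 1)]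
    exact jclamp_eq_one le_rfl

/-- `Θ2 : E1 ≃ E2`. -/
def theta2 : ContinuousMap.HomotopyRel (E1c W w₀ m) (E2c W m)
    {suspBase _ (Sum.inr () : XPt W m)} := by
  refine quotHomotopyRel
    (extX W m (suspBase _ (Sum.inr () : XPt W m)) (chi2raw W w₀ m))
    (extX_continuous W m _ _ (chi2raw_continuous W w₀ m)) ?_ ?_ ?_ ?_
  · rintro s ⟨z, t⟩ ⟨z', t'⟩ ⟨h, h'⟩
    have key : ∀ z'' : XPt W m, ∀ t'' : unitInterval,
        suspCollapsed (XPt W m) (Sum.inr ()) (z'', t'') →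
        extX W m (suspBase _ (Sum.inr () : XPt W m)) (chi2raw W w₀ m) s (z'', t'') =
          suspBase _ (Sum.inr () : XPt W m) := by
      intro z'' t'' hc
      cases z'' with
      | inr u => rfl
      | inl x =>
        rcases hc with hc | hc | hc
        · exact chi2raw_collapsed W w₀ m s x t'' (Or.inl hc)
        · exact chi2raw_collapsed W w₀ m s x t'' (Or.inr hc)
        · exact absurd hc (by simp)
    rw [key z t h, key z' t' h']
  · rintro ⟨z, t⟩
    cases z with
    | inr u => rfl
    | inl x =>
      show chi2raw W w₀ m 0 (x, t) = e1raw W w₀ m (x, t)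
      rw [chi2raw, e1raw]
      by_cases h4 : 4 * (t:ℝ) ≤ 1
      · rw [if_pos h4, if_pos h4]
      · by_cases h2 : 2 * (t:ℝ) ≤ 1
        · rw [if_neg h4, if_neg h4, if_pos h2, if_pos h2, Set.Icc.coe_zero,
            max_eq_left (by linarith : (0:ℝ) ≤ 2 - 4 * t)]
        · have h2' := not_le.mp h2
          rw [if_neg h4, if_neg h4, if_neg h2, if_neg h2, Set.Icc.coe_zero,
            max_eq_left (by linarith : (0:ℝ) ≤ 2 * t - 1)]
  · rintro ⟨z, t⟩
    cases z with
    | inr u => rfl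
    | inl x =>
      show chi2raw W w₀ m 1 (x, t) = e2raw W m (x, t)
      rw [chi2raw, e2raw]
      by_cases h4 : 4 * (t:ℝ) ≤ 1
      · rw [if_pos h4, min_eq_left h4]
      · have h4' := not_le.mp h4
        have ht1 : (t:ℝ) ≤ 1 := t.2.2
        rw [if_neg h4, show min (4 * (t:ℝ)) 1 = 1 from min_eq_right (by linarith)]
        by_cases h2 : 2 * (t:ℝ) ≤ 1
        · rw [if_pos h2, Set.Icc.coe_one, max_eq_right (by linarith : (2:ℝ) - 4 * t ≤ 1),
            jclamp_eq_one le_rfl, mk_eq_suspBase₁, mk_eq_suspBase₁]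
        · rw [if_neg h2, Set.Icc.coe_one, max_eq_right (by linarith : 2 * (t:ℝ) - 1 ≤ 1),
            jclamp_eq_one le_rfl, mk_eq_suspBase₁, mk_eq_suspBase₁]
  · intro s
    rfl

/-- third homotopy raw map. -/
def chi3raw (s : unitInterval) (q : (Fin (m+1) → W) × unitInterval) : SXt W m :=
  Quot.mk _ (Sum.inl q.1, jclamp (min ((4 - 3 * (s:ℝ)) * q.2) 1))

lemma chi3raw_collapsed (s : unitInterval) (x : Fin (m+1) → W) (t : unitInterval)
    (h : t = 0 ∨ t = 1) :
    chi3raw W m s (x, t) = suspBase _ (Sum.inr () : XPt W m) := by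
  rcases h with h | h
  · refine mk_eq_suspBase (Or.inl ?_)
    show jclamp (min ((4 - 3 * (s:ℝ)) * t) 1) = 0
    rw [h, Set.Icc.coe_zero, mul_zero, show min (0:ℝ) 1 = 0 by norm_num]
    exact jclamp_eq_zero le_rfl
  · refine mk_eq_suspBase (Or.inr (Or.inl ?_))
    show jclamp (min ((4 - 3 * (s:ℝ)) * t) 1) = 1
    rw [h, Set.Icc.coe_one, mul_one,
      min_eq_right (by have := s.2.2; linarith : (1:ℝ) ≤ 4 - 3 * s)]
    exact jclamp_eq_one le_rfl

/-- `Θ3 : E2 ≃ id`. -/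
def theta3 : ContinuousMap.HomotopyRel (E2c W m) (ContinuousMap.id (SXt W m))
    {suspBase _ (Sum.inr () : XPt W m)} := by
  refine quotHomotopyRel
    (extX W m (suspBase _ (Sum.inr () : XPt W m)) (chi3raw W m))
    (extX_continuous W m _ _ (by
      have ht : Continuous fun q : unitInterval × ((Fin (m+1) → W) × unitInterval) =>
          ((q.2.2 : unitInterval) : ℝ) :=
        continuous_subtype_val.comp (continuous_snd.comp continuous_snd)
      have hs : Continuous fun q : unitInterval × ((Fin (m+1) → W) × unitInterval) =>
          ((q.1 : unitInterval) : ℝ) :=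
        continuous_subtype_val.comp continuous_fst
      exact continuous_quot_mk.comp ((continuous_inl.comp
        (continuous_fst.comp continuous_snd)).prodMk
        (jclamp_continuous.comp (((continuous_const.sub
          (continuous_const.mul hs)).mul ht).min continuous_const))))) ?_ ?_ ?_ ?_
  · rintro s ⟨z, t⟩ ⟨z', t'⟩ ⟨h, h'⟩
    have key : ∀ z'' : XPt W m, ∀ t'' : unitInterval,
        suspCollapsed (XPt W m) (Sum.inr ()) (z'', t'') →
        extX W m (suspBase _ (Sum.inr () : XPt W m)) (chi3raw W m) s (z'', t'') =
          suspBase _ (Sum.inr () : XPt W m) := by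
      intro z'' t'' hc
      cases z'' with
      | inr u => rfl
      | inl x =>
        rcases hc with hc | hc | hc
        · exact chi3raw_collapsed W m s x t'' (Or.inl hc)
        · exact chi3raw_collapsed W m s x t'' (Or.inr hc)
        · exact absurd hc (by simp)
    rw [key z t h, key z' t' h']
  · rintro ⟨z, t⟩
    cases z with
    | inr u => rfl
    | inl x =>
      show chi3raw W m 0 (x, t) = e2raw W m (x, t)
      rw [chi3raw, e2raw, Set.Icc.coe_zero, show (4:ℝ) - 3 * 0 = 4 by norm_num]
  · rintro ⟨z, t⟩
    cases z with
    | inr u =>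
      show suspBase _ (Sum.inr () : XPt W m) = Quot.mk _ ((Sum.inr u : XPt W m), t)
      exact (mk_eq_suspBase (Or.inr (Or.inr (by cases u; rfl)))).symm
    | inl x =>
      show chi3raw W m 1 (x, t) = Quot.mk _ ((Sum.inl x : XPt W m), t)
      rw [chi3raw, Set.Icc.coe_one, show (4:ℝ) - 3 * 1 = 1 by norm_num, one_mul,
        min_eq_left (t.2.2 : (t:ℝ) ≤ 1), jclamp_coe_self]
  · intro s
    rfl

/-- Side 1: `G ∘ F` is homotopic to the identity rel the basepoint. -/
lemma side_one : ((Gc W w₀ m hW).comp (Fc W w₀ m)).HomotopicRel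
    (ContinuousMap.id (SXt W m)) {suspBase _ (Sum.inr () : XPt W m)} :=
  (ContinuousMap.HomotopicRel.trans ⟨theta1 W w₀ m hW⟩
    (ContinuousMap.HomotopicRel.trans ⟨theta2 W w₀ m⟩ ⟨theta3 W m⟩))

end SideOneHomotopies

/-! ### Side 2 : `F ∘ G ≃ id` on the wedge -/

section SideTwo

variable (m : ℕ) (hW : WellPointed.{u, u} W w₀)

/-! #### the `𝔉̂_{m+1}` (inr) component -/

/-- homotopy on the `inr` component. -/
def kraw (s : unitInterval) (q : APt W m × unitInterval) : WdT W w₀ m :=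
  Quot.mk _ (Sum.inr (Quot.mk _ (q.1, jclamp ((2 - (s:ℝ)) * q.2 - (1 - (s:ℝ))))))

lemma kraw_continuous :
    Continuous fun q : unitInterval × (APt W m × unitInterval) => kraw W w₀ m q.1 q.2 := by
  have ht : Continuous fun q : unitInterval × (APt W m × unitInterval) =>
      ((q.2.2 : unitInterval) : ℝ) :=
    continuous_subtype_val.comp (continuous_snd.comp continuous_snd)
  have hs : Continuous fun q : unitInterval × (APt W m × unitInterval) =>
      ((q.1 : unitInterval) : ℝ) :=
    continuous_subtype_val.comp continuous_fst
  exact continuous_quot_mk.comp (continuous_inr.comp (continuous_quot_mk.comp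
    ((continuous_fst.comp continuous_snd).prodMk
      (jclamp_continuous.comp (((continuous_const.sub hs).mul ht).sub
        (continuous_const.sub hs))))))

lemma kraw_collapsed (s : unitInterval) (q : APt W m × unitInterval)
    (h : suspCollapsed (APt W m) (Sum.inr ()) q) :
    kraw W w₀ m s q = wedgeBase _ _ _ _ := by
  rcases h with h | h | h
  · refine wedge_inr_base W w₀ m (Or.inl ?_)
    show jclamp ((2 - (s:ℝ)) * q.2 - (1 - (s:ℝ))) = 0
    rw [h, Set.Icc.coe_zero, mul_zero]
    exact jclamp_eq_zero (by have := s.2.2; linarith)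
  · refine wedge_inr_base W w₀ m (Or.inr (Or.inl ?_))
    show jclamp ((2 - (s:ℝ)) * q.2 - (1 - (s:ℝ))) = 1
    rw [h, Set.Icc.coe_one, mul_one]
    exact jclamp_eq_one (by norm_num)
  · exact wedge_inr_base W w₀ m (Or.inr (Or.inr (by rw [h])))

/-- `Hr : (F ∘ G) ∘ inr ≃ inr` rel basepoint. -/
def psiR : ContinuousMap.HomotopyRel
    (((Fc W w₀ m).comp (Gc W w₀ m hW)).comp (inrC W w₀ m))
    ((ContinuousMap.id (WdT W w₀ m)).comp (inrC W w₀ m)) {fHatBase W m} := by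
  refine quotHomotopyRel (kraw W w₀ m) (kraw_continuous W w₀ m) ?_ ?_ ?_ ?_
  · intro s p q hpq
    rw [kraw_collapsed W w₀ m s p hpq.1, kraw_collapsed W w₀ m s q hpq.2]
  · rintro ⟨z, t⟩
    show kraw W w₀ m 0 (z, t) =
      Fc W w₀ m (Gc W w₀ m hW (inrC W w₀ m (Quot.mk _ (z, t))))
    rw [show Gc W w₀ m hW (inrC W w₀ m (Quot.mk _ (z, t))) =
      (Quot.mk _ (ihat W w₀ m z, t) : SXt W m) from rfl]
    show kraw W w₀ m 0 (z, t) = Fraw W w₀ m (ihat W w₀ m z, t)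
    cases z with
    | inr u =>
      rw [show ihat W w₀ m (Sum.inr u) = Sum.inr () from by cases u; rfl,
        Fraw_collapsed W w₀ m (Or.inr (Or.inr rfl))]
      exact wedge_inr_base W w₀ m (Or.inr (Or.inr rfl))
    | inl a =>
      rw [show ihat W w₀ m (Sum.inl a) = Sum.inl (Fin.snoc a w₀) from rfl, Fraw]
      by_cases h2 : 2 * (t:ℝ) ≤ 1
      · rw [if_pos h2]
        rw [show qhat W w₀ m (Sum.inl (Fin.snoc a w₀)) =
            Quot.mk (PinchRel W w₀ m) (Fin.snoc a w₀) from rfl,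
          mk_eq_pinchedBase W w₀ m (by rw [Fin.snoc_last])]
        rw [wedge_inl_base W w₀ m (Or.inr (Or.inr rfl))]
        refine wedge_inr_base W w₀ m (Or.inl ?_)
        show jclamp ((2 - ((0:unitInterval):ℝ)) * t - (1 - ((0:unitInterval):ℝ))) = 0
        rw [Set.Icc.coe_zero]
        exact jclamp_eq_zero (by linarith)
      · rw [if_neg h2]
        rw [show rhat W m (Sum.inl (Fin.snoc a w₀)) =
            Sum.inl (Fin.init (Fin.snoc a w₀ : Fin (m+1) → W)) from rfl, Fin.init_snoc]
        rw [kraw, show (2 - ((0:unitInterval):ℝ)) * t - (1 - ((0:unitInterval):ℝ))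
            = 2 * (t:ℝ) - 1 by rw [Set.Icc.coe_zero]; ring]
  · rintro ⟨z, t⟩
    show kraw W w₀ m 1 (z, t) = Quot.mk _ (Sum.inr (Quot.mk _ (z, t)))
    rw [kraw, show (2 - ((1:unitInterval):ℝ)) * t - (1 - ((1:unitInterval):ℝ)) = (t:ℝ) by
      rw [Set.Icc.coe_one]; ring, jclamp_coe_self]
  · intro s
    show kraw W w₀ m s (Sum.inr (), 0) = _
    rw [kraw_collapsed W w₀ m s _ (Or.inl rfl)]
    show _ = Fc W w₀ m (iC W w₀ m (fHatBase W m))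
    rw [iC_base W w₀ m, Fc_base W w₀ m]

/-! #### bundled maps on `ΣP` from raw data -/

/-- descend raw data to `P × I`. -/
def spPhi (h : (Fin (m+1) → W) × unitInterval → WdT W w₀ m)
    (hlast : ∀ t x, x (Fin.last m) = w₀ → h (x, t) = wedgeBase _ _ _ _) :
    Pinched W w₀ m × unitInterval → WdT W w₀ m :=
  liftP W w₀ m (fun _ q => h q) (fun _ t x hx => hlast t x hx) 0

lemma spPhi_collapsed (h : (Fin (m+1) → W) × unitInterval → WdT W w₀ m)
    (hlast : ∀ t x, x (Fin.last m) = w₀ → h (x, t) = wedgeBase _ _ _ _)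
    (hends : ∀ x t, (t = 0 ∨ t = 1) → h (x, t) = wedgeBase _ _ _ _)
    (pt : Pinched W w₀ m × unitInterval)
    (hcol : suspCollapsed (Pinched W w₀ m) (pinchedBase W w₀ m) pt) :
    spPhi W w₀ m h hlast pt = wedgeBase _ _ _ _ := by
  obtain ⟨p, τ⟩ := pt
  rcases hcol with hcol | hcol | hcol
  · induction p using Quot.ind with
    | _ x => exact hends x τ (Or.inl hcol)
  · induction p using Quot.ind with
    | _ x => exact hends x τ (Or.inr hcol)
  · rw [show p = pinchedBase W w₀ m from hcol]
    exact hlast τ _ rfl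

/-- Bundle raw data into a map `ΣP → ΣP ∨ 𝔉̂_{m+1}`. -/
def mkSPMap (h : (Fin (m+1) → W) × unitInterval → WdT W w₀ m)
    (hlast : ∀ t x, x (Fin.last m) = w₀ → h (x, t) = wedgeBase _ _ _ _)
    (hends : ∀ x t, (t = 0 ∨ t = 1) → h (x, t) = wedgeBase _ _ _ _)
    (hc : Continuous h) : C(SPt W w₀ m, WdT W w₀ m) := by
  refine ⟨Quot.lift (spPhi W w₀ m h hlast) (fun pt pt' hpt => by
    rw [spPhi_collapsed W w₀ m h hlast hends pt hpt.1,
      spPhi_collapsed W w₀ m h hlast hends pt' hpt.2]), continuous_quot_lift _ ?_⟩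
  have hc2 : Continuous fun q : unitInterval × ((Fin (m+1) → W) × unitInterval) =>
      h q.2 := hc.comp continuous_snd
  have := liftP_continuous W w₀ m (fun _ q => h q) (fun _ t x hx => hlast t x hx) hc2
  exact this.comp (continuous_const.prodMk continuous_id)

end SideTwo

/-! ### Side 2 : the `ΣP` (inl) component -/

section SideTwoL

variable (m : ℕ) (hW : WellPointed.{u, u} W w₀)

/-- collar data at time one. -/
def cOf (x : Fin (m+1) → W) : ℝ := (vF W w₀ hW (x (Fin.last m)) 1 : ℝ)

def uOf (x : Fin (m+1) → W) : W := uF W w₀ hW (x (Fin.last m)) 1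

lemma cOf_nonneg (x : Fin (m+1) → W) : 0 ≤ cOf W w₀ m hW x :=
  (vF W w₀ hW (x (Fin.last m)) 1).2.1

lemma cOf_le_one (x : Fin (m+1) → W) : cOf W w₀ m hW x ≤ 1 :=
  (vF W w₀ hW (x (Fin.last m)) 1).2.2

lemma cOf_last (x : Fin (m+1) → W) (h : x (Fin.last m) = w₀) : cOf W w₀ m hW x = 1 := by
  rw [cOf, h, vF_base, Set.Icc.coe_one]

lemma uOf_last (x : Fin (m+1) → W) (h : x (Fin.last m) = w₀) : uOf W w₀ m hW x = w₀ := by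
  rw [uOf, h, uF_base]

lemma uc_dichotomy (x : Fin (m+1) → W) : cOf W w₀ m hW x = 0 ∨ uOf W w₀ m hW x = w₀ := by
  rcases uv_dichotomy W w₀ hW (x (Fin.last m)) 1 with h | h
  · exact Or.inl (by rw [cOf, h, Set.Icc.coe_zero])
  · exact Or.inr h

lemma cOf_continuous : Continuous (cOf W w₀ m hW) := by
  have hp : Continuous fun x : Fin (m+1) → W =>
      ((x (Fin.last m), (1:unitInterval)) : W × unitInterval) :=
    (continuous_apply _).prodMk continuous_const
  exact continuous_subtype_val.comp ((vF_continuous W w₀ hW).comp hp)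

lemma uOf_continuous : Continuous (uOf W w₀ m hW) := by
  have hp : Continuous fun x : Fin (m+1) → W =>
      ((x (Fin.last m), (1:unitInterval)) : W × unitInterval) :=
    (continuous_apply _).prodMk continuous_const
  exact (uF_continuous W w₀ hW).comp hp

lemma snocu_continuous : Continuous fun x : Fin (m+1) → W =>
    (Fin.snoc (Fin.init x) (uOf W w₀ m hW x) : Fin (m+1) → W) :=
  continuous_finSnoc W m (continuous_finInit W m) (uOf_continuous W w₀ m hW)

/-- the first intermediate map on representatives. -/
def m1raw (q : (Fin (m+1) → W) × unitInterval) : WdT W w₀ m :=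
  Quot.mk _ (Sum.inl (Quot.mk _
    (Quot.mk _ (Fin.snoc (Fin.init q.1) (uOf W w₀ m hW q.1) : Fin (m+1) → W),
      jclamp (min (2 * (2 * q.2 * (1 - cOf W w₀ m hW q.1))) 1))))

/-- the second intermediate map on representatives. -/
def m0raw (q : (Fin (m+1) → W) × unitInterval) : WdT W w₀ m :=
  Quot.mk _ (Sum.inl (Quot.mk _ (Quot.mk _ q.1, jclamp (min (4 * (q.2:ℝ)) 1))))

lemma m1raw_last (t : unitInterval) (x : Fin (m+1) → W) (h : x (Fin.last m) = w₀) :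
    m1raw W w₀ m hW (x, t) = wedgeBase _ _ _ _ :=
  wedge_inl_base W w₀ m (Or.inr (Or.inr (by
    rw [uOf_last W w₀ m hW x h]
    exact mk_eq_pinchedBase W w₀ m (Fin.snoc_last _ _))))

lemma m1raw_ends (x : Fin (m+1) → W) (t : unitInterval) (h : t = 0 ∨ t = 1) :
    m1raw W w₀ m hW (x, t) = wedgeBase _ _ _ _ := by
  rcases h with h | h
  · refine wedge_inl_base W w₀ m (Or.inl ?_)
    show jclamp (min (2 * (2 * (t:ℝ) * (1 - cOf W w₀ m hW x))) 1) = 0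
    rw [h, Set.Icc.coe_zero, mul_zero, zero_mul, mul_zero,
      show min (0:ℝ) 1 = 0 by norm_num]
    exact jclamp_eq_zero le_rfl
  · rcases uc_dichotomy W w₀ m hW x with hc | hc
    · refine wedge_inl_base W w₀ m (Or.inr (Or.inl ?_))
      show jclamp (min (2 * (2 * (t:ℝ) * (1 - cOf W w₀ m hW x))) 1) = 1
      rw [h, Set.Icc.coe_one, hc,
        show (2:ℝ) * (2 * 1 * (1 - 0)) = 4 by ring, show min (4:ℝ) 1 = 1 by norm_num]
      exact jclamp_eq_one le_rfl
    · refine wedge_inl_base W w₀ m (Or.inr (Or.inr ?_))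
      rw [hc]
      exact mk_eq_pinchedBase W w₀ m (Fin.snoc_last _ _)

lemma m0raw_last (t : unitInterval) (x : Fin (m+1) → W) (h : x (Fin.last m) = w₀) :
    m0raw W w₀ m (x, t) = wedgeBase _ _ _ _ :=
  wedge_inl_base W w₀ m (Or.inr (Or.inr (mk_eq_pinchedBase W w₀ m h)))

lemma m0raw_ends (x : Fin (m+1) → W) (t : unitInterval) (h : t = 0 ∨ t = 1) :
    m0raw W w₀ m (x, t) = wedgeBase _ _ _ _ := by
  rcases h with h | h
  · refine wedge_inl_base W w₀ m (Or.inl ?_)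
    show jclamp (min (4 * (t:ℝ)) 1) = 0
    rw [h, Set.Icc.coe_zero, mul_zero, show min (0:ℝ) 1 = 0 by norm_num]
    exact jclamp_eq_zero le_rfl
  · refine wedge_inl_base W w₀ m (Or.inr (Or.inl ?_))
    show jclamp (min (4 * (t:ℝ)) 1) = 1
    rw [h, Set.Icc.coe_one, mul_one, show min (4:ℝ) 1 = 1 by norm_num]
    exact jclamp_eq_one le_rfl

lemma m1raw_continuous : Continuous (m1raw W w₀ m hW) := by
  have ht : Continuous fun q : (Fin (m+1) → W) × unitInterval => ((q.2 : unitInterval) : ℝ) :=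
    continuous_subtype_val.comp continuous_snd
  exact continuous_quot_mk.comp (continuous_inl.comp (continuous_quot_mk.comp
    ((continuous_quot_mk.comp ((snocu_continuous W w₀ m hW).comp continuous_fst)).prodMk
      (jclamp_continuous.comp ((continuous_const.mul ((continuous_const.mul ht).mul
        (continuous_const.sub ((cOf_continuous W w₀ m hW).comp continuous_fst)))).min
        continuous_const)))))

lemma m0raw_continuous : Continuous (m0raw W w₀ m) := by
  have ht : Continuous fun q : (Fin (m+1) → W) × unitInterval => ((q.2 : unitInterval) : ℝ) :=
    continuous_subtype_val.comp continuous_snd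
  exact continuous_quot_mk.comp (continuous_inl.comp (continuous_quot_mk.comp
    ((continuous_quot_mk.comp continuous_fst).prodMk
      (jclamp_continuous.comp ((continuous_const.mul ht).min continuous_const)))))

def M1c : C(SPt W w₀ m, WdT W w₀ m) :=
  mkSPMap W w₀ m (m1raw W w₀ m hW) (m1raw_last W w₀ m hW) (m1raw_ends W w₀ m hW)
    (m1raw_continuous W w₀ m hW)

def M0c : C(SPt W w₀ m, WdT W w₀ m) :=
  mkSPMap W w₀ m (m0raw W w₀ m) (m0raw_last W w₀ m) (m0raw_ends W w₀ m)
    (m0raw_continuous W w₀ m)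

end SideTwoL

/-! ### Side 2: the homotopies on the `ΣP` component -/

section SideTwoH

variable (m : ℕ) (hW : WellPointed.{u, u} W w₀)

lemma liftP_wedge_collapsed (χ : unitInterval → ((Fin (m+1) → W) × unitInterval) → WdT W w₀ m)
    (hlast : ∀ s t x, x (Fin.last m) = w₀ → χ s (x, t) = wedgeBase _ _ _ _)
    (hends : ∀ s x t, (t = 0 ∨ t = 1) → χ s (x, t) = wedgeBase _ _ _ _)
    (s : unitInterval) (pt : Pinched W w₀ m × unitInterval)
    (hcol : suspCollapsed (Pinched W w₀ m) (pinchedBase W w₀ m) pt) :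
    liftP W w₀ m χ hlast s pt = wedgeBase _ _ _ _ := by
  obtain ⟨p, τ⟩ := pt
  rcases hcol with hcol | hcol | hcol
  · induction p using Quot.ind with
    | _ x => exact hends s x τ (Or.inl hcol)
  · induction p using Quot.ind with
    | _ x => exact hends s x τ (Or.inr hcol)
  · rw [show p = pinchedBase W w₀ m from hcol]
    exact hlast s τ _ rfl

/-- `κ1`: contracting the `inr` excursions of `F ∘ s`. -/
def kappa1raw (s : unitInterval) (q : (Fin (m+1) → W) × unitInterval) : WdT W w₀ m :=
  if 2 * (q.2:ℝ) ≤ 1 then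
    if 2 * (2 * (q.2:ℝ) * (1 - cOf W w₀ m hW q.1)) ≤ 1 then
      Quot.mk _ (Sum.inl (Quot.mk _
        (Quot.mk _ (Fin.snoc (Fin.init q.1) (uOf W w₀ m hW q.1) : Fin (m+1) → W),
          jclamp (2 * (2 * q.2 * (1 - cOf W w₀ m hW q.1))))))
    else
      Quot.mk _ (Sum.inr (Quot.mk _ ((Sum.inl (Fin.init q.1) : APt W m),
        jclamp ((1 - (s:ℝ)) * (2 * (2 * q.2 * (1 - cOf W w₀ m hW q.1)) - 1)))))
  else
    if 2 * ((2 - 2 * (q.2:ℝ)) * (1 - cOf W w₀ m hW q.1)) ≤ 1 then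
      wedgeBase _ _ _ _
    else
      Quot.mk _ (Sum.inr (Quot.mk _ ((Sum.inl (Fin.init q.1) : APt W m),
        jclamp ((1 - (s:ℝ)) * (2 * ((2 - 2 * q.2) * (1 - cOf W w₀ m hW q.1)) - 1)))))

lemma kappa1raw_continuous :
    Continuous fun q : unitInterval × ((Fin (m+1) → W) × unitInterval) =>
      kappa1raw W w₀ m hW q.1 q.2 := by
  have ht : Continuous fun q : unitInterval × ((Fin (m+1) → W) × unitInterval) =>
      ((q.2.2 : unitInterval) : ℝ) :=
    continuous_subtype_val.comp (continuous_snd.comp continuous_snd)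
  have hs : Continuous fun q : unitInterval × ((Fin (m+1) → W) × unitInterval) =>
      ((q.1 : unitInterval) : ℝ) :=
    continuous_subtype_val.comp continuous_fst
  have hc : Continuous fun q : unitInterval × ((Fin (m+1) → W) × unitInterval) =>
      (1 - cOf W w₀ m hW q.2.1 : ℝ) :=
    continuous_const.sub ((cOf_continuous W w₀ m hW).comp (continuous_fst.comp continuous_snd))
  have hsnu : Continuous fun q : unitInterval × ((Fin (m+1) → W) × unitInterval) =>
      (Fin.snoc (Fin.init q.2.1) (uOf W w₀ m hW q.2.1) : Fin (m+1) → W) :=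
    (snocu_continuous W w₀ m hW).comp (continuous_fst.comp continuous_snd)
  have hini : Continuous fun q : unitInterval × ((Fin (m+1) → W) × unitInterval) =>
      (Sum.inl (Fin.init q.2.1) : APt W m) :=
    continuous_inl.comp ((continuous_finInit W m).comp (continuous_fst.comp continuous_snd))
  have hA : Continuous fun q : unitInterval × ((Fin (m+1) → W) × unitInterval) =>
      (2 * (2 * (q.2.2:ℝ) * (1 - cOf W w₀ m hW q.2.1))) :=
    continuous_const.mul ((continuous_const.mul ht).mul hc)
  have hB : Continuous fun q : unitInterval × ((Fin (m+1) → W) × unitInterval) =>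
      (2 * ((2 - 2 * (q.2.2:ℝ)) * (1 - cOf W w₀ m hW q.2.1))) :=
    continuous_const.mul ((continuous_const.sub (continuous_const.mul ht)).mul hc)
  refine Continuous.if_le ?_ ?_ (continuous_const.mul ht) continuous_const ?_
  · refine Continuous.if_le ?_ ?_ hA continuous_const ?_
    · exact continuous_quot_mk.comp (continuous_inl.comp (continuous_quot_mk.comp
        ((continuous_quot_mk.comp hsnu).prodMk (jclamp_continuous.comp hA))))
    · exact continuous_quot_mk.comp (continuous_inr.comp (continuous_quot_mk.comp
        (hini.prodMk (jclamp_continuous.comp ((continuous_const.sub hs).mul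
          (hA.sub continuous_const))))))
    · intro q hq
      rw [hq, jclamp_eq_one le_rfl, sub_self, mul_zero, jclamp_eq_zero le_rfl]
      rw [wedge_inl_base W w₀ m (Or.inr (Or.inl rfl)),
        wedge_inr_base W w₀ m (Or.inl rfl)]
  · refine Continuous.if_le continuous_const ?_ hB continuous_const ?_
    · exact continuous_quot_mk.comp (continuous_inr.comp (continuous_quot_mk.comp
        (hini.prodMk (jclamp_continuous.comp ((continuous_const.sub hs).mul
          (hB.sub continuous_const))))))
    · intro q hq
      rw [hq, sub_self, mul_zero, jclamp_eq_zero le_rfl]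
      rw [wedge_inr_base W w₀ m (Or.inl rfl)]
  · intro q hq
    rw [show (2:ℝ) - 2 * (q.2.2:ℝ) = 2 * (q.2.2:ℝ) by linarith]
    by_cases hin : 2 * (2 * (q.2.2:ℝ) * (1 - cOf W w₀ m hW q.2.1)) ≤ 1
    · rw [if_pos hin, if_pos hin]
      rcases uc_dichotomy W w₀ m hW q.2.1 with hcc | hcc
      · exfalso
        rw [hcc] at hin
        nlinarith
      · rw [hcc, mk_eq_pinchedBase W w₀ m (Fin.snoc_last _ _)]
        exact wedge_inl_base W w₀ m (Or.inr (Or.inr rfl))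
    · rw [if_neg hin, if_neg hin]

lemma kappa1raw_last (s : unitInterval) (t : unitInterval) (x : Fin (m+1) → W)
    (h : x (Fin.last m) = w₀) :
    kappa1raw W w₀ m hW s (x, t) = wedgeBase _ _ _ _ := by
  have hc : cOf W w₀ m hW x = 1 := cOf_last W w₀ m hW x h
  rw [kappa1raw, hc, sub_self]
  simp only [mul_zero]
  rw [if_pos (by norm_num : (0:ℝ) ≤ 1), if_pos (by norm_num : (0:ℝ) ≤ 1)]
  split_ifs
  · exact wedge_inl_base W w₀ m (Or.inl (jclamp_eq_zero le_rfl))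
  · rfl

lemma kappa1raw_ends (s : unitInterval) (x : Fin (m+1) → W) (t : unitInterval)
    (h : t = 0 ∨ t = 1) :
    kappa1raw W w₀ m hW s (x, t) = wedgeBase _ _ _ _ := by
  rcases h with h | h
  · rw [kappa1raw, if_pos (by rw [h, Set.Icc.coe_zero]; norm_num),
      if_pos (by rw [h, Set.Icc.coe_zero]; norm_num)]
    refine wedge_inl_base W w₀ m (Or.inl ?_)
    show jclamp (2 * (2 * (t:ℝ) * (1 - cOf W w₀ m hW x))) = 0
    rw [h, Set.Icc.coe_zero, mul_zero, zero_mul, mul_zero]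
    exact jclamp_eq_zero le_rfl
  · rw [kappa1raw, if_neg (by rw [h, Set.Icc.coe_one]; norm_num),
      if_pos (by
        rw [h, Set.Icc.coe_one, show (2:ℝ) - 2 * 1 = 0 by norm_num, zero_mul, mul_zero]
        norm_num)]

/-- value of `F ∘ s` on representatives. -/
lemma FS_eval (x : Fin (m+1) → W) (t : unitInterval) :
    Fc W w₀ m (sraw W w₀ m hW (x, t)) = kappa1raw W w₀ m hW 0 (x, t) := by
  have ht0 : (0:ℝ) ≤ (t:ℝ) := t.2.1
  have ht1 : (t:ℝ) ≤ 1 := t.2.2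
  have hv0 : (0:ℝ) ≤ (vF W w₀ hW (x (Fin.last m)) 1 : ℝ) :=
    (vF W w₀ hW (x (Fin.last m)) 1).2.1
  have hv1 : (vF W w₀ hW (x (Fin.last m)) 1 : ℝ) ≤ 1 :=
    (vF W w₀ hW (x (Fin.last m)) 1).2.2
  rw [sraw, kappa1raw]
  simp only [cOf, uOf]
  by_cases h2 : 2 * (t:ℝ) ≤ 1
  · rw [if_pos h2, if_pos h2]
    have hj : ((jclamp (2 * (t:ℝ) * (1 - vF W w₀ hW (x (Fin.last m)) 1)) : unitInterval) : ℝ) =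
        2 * (t:ℝ) * (1 - vF W w₀ hW (x (Fin.last m)) 1) :=
      jclamp_coe (by nlinarith) (by nlinarith)
    show Fraw W w₀ m _ = _
    rw [Fraw]
    by_cases hin : 2 * (2 * (t:ℝ) * (1 - vF W w₀ hW (x (Fin.last m)) 1)) ≤ 1
    · rw (transparency := .default) [if_pos (by rw [hj]; linarith), if_pos hin, hj]
      rfl
    · rw (transparency := .default) [if_neg (by rw [hj]; exact fun hh => hin (by linarith)), if_neg hin, hj]
      rw [show rhat W m (Sum.inl (Fin.snoc (Fin.init x)
          (uF W w₀ hW (x (Fin.last m)) 1) : Fin (m+1) → W)) =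
        Sum.inl (Fin.init (Fin.snoc (Fin.init x)
          (uF W w₀ hW (x (Fin.last m)) 1) : Fin (m+1) → W)) from rfl, Fin.init_snoc]
      rw [show (1 - ((0:unitInterval):ℝ)) *
          (2 * (2 * (t:ℝ) * (1 - vF W w₀ hW (x (Fin.last m)) 1)) - 1) =
          2 * (2 * (t:ℝ) * (1 - vF W w₀ hW (x (Fin.last m)) 1)) - 1 by
        rw [Set.Icc.coe_zero]; ring]
  · rw [if_neg h2, if_neg h2]
    have h2' := not_le.mp h2
    have hj : ((jclamp ((2 - 2 * (t:ℝ)) * (1 - vF W w₀ hW (x (Fin.last m)) 1)) :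
        unitInterval) : ℝ) =
        (2 - 2 * (t:ℝ)) * (1 - vF W w₀ hW (x (Fin.last m)) 1) :=
      jclamp_coe (by nlinarith) (by nlinarith)
    show Fraw W w₀ m _ = _
    rw [Fraw]
    by_cases hin : 2 * ((2 - 2 * (t:ℝ)) * (1 - vF W w₀ hW (x (Fin.last m)) 1)) ≤ 1
    · rw (transparency := .default) [if_pos (by rw [hj]; linarith), if_pos hin]
      rw [show qhat W w₀ m (Sum.inl (Fin.snoc (Fin.init x) w₀ : Fin (m+1) → W)) =
        Quot.mk (PinchRel W w₀ m) (Fin.snoc (Fin.init x) w₀) from rfl,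
        mk_eq_pinchedBase W w₀ m (Fin.snoc_last _ _)]
      exact wedge_inl_base W w₀ m (Or.inr (Or.inr rfl))
    · rw (transparency := .default) [if_neg (by rw [hj]; exact fun hh => hin (by linarith)), if_neg hin, hj]
      rw [show rhat W m (Sum.inl (Fin.snoc (Fin.init x) w₀ : Fin (m+1) → W)) =
        Sum.inl (Fin.init (Fin.snoc (Fin.init x) w₀ : Fin (m+1) → W)) from rfl, Fin.init_snoc]
      rw [show (1 - ((0:unitInterval):ℝ)) *
          (2 * ((2 - 2 * (t:ℝ)) * (1 - vF W w₀ hW (x (Fin.last m)) 1)) - 1) =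
          2 * ((2 - 2 * (t:ℝ)) * (1 - vF W w₀ hW (x (Fin.last m)) 1)) - 1 by
        rw [Set.Icc.coe_zero]; ring]

/-- `ψ1 : (F ∘ G) ∘ inl ≃ M1`. -/
def psi1 : ContinuousMap.HomotopyRel
    (((Fc W w₀ m).comp (Gc W w₀ m hW)).comp (inlC W w₀ m)) (M1c W w₀ m hW)
    {suspBase (Pinched W w₀ m) (pinchedBase W w₀ m)} := by
  refine quotHomotopyRel (liftP W w₀ m (kappa1raw W w₀ m hW) (kappa1raw_last W w₀ m hW))
    (liftP_continuous W w₀ m _ _ (kappa1raw_continuous W w₀ m hW)) ?_ ?_ ?_ ?_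
  · intro s p q hpq
    rw [liftP_wedge_collapsed W w₀ m _ _ (kappa1raw_ends W w₀ m hW) s p hpq.1,
      liftP_wedge_collapsed W w₀ m _ _ (kappa1raw_ends W w₀ m hW) s q hpq.2]
  · rintro ⟨p, τ⟩
    induction p using Quot.ind with
    | _ x =>
      show kappa1raw W w₀ m hW 0 (x, τ) =
        Fc W w₀ m (Gc W w₀ m hW (inlC W w₀ m (Quot.mk _ (Quot.mk _ x, τ))))
      rw [show Gc W w₀ m hW (inlC W w₀ m (Quot.mk _ (Quot.mk _ x, τ))) =
        sraw W w₀ m hW (x, τ) from rfl]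
      exact (FS_eval W w₀ m hW x τ).symm
  · rintro ⟨p, τ⟩
    induction p using Quot.ind with
    | _ x =>
      show kappa1raw W w₀ m hW 1 (x, τ) = m1raw W w₀ m hW (x, τ)
      rw [kappa1raw, m1raw]
      simp only [cOf, uOf]
      by_cases h2 : 2 * (τ:ℝ) ≤ 1
      · rw [if_pos h2]
        by_cases hin : 2 * (2 * (τ:ℝ) * (1 - vF W w₀ hW (x (Fin.last m)) 1)) ≤ 1
        · rw (transparency := .default) [if_pos hin, min_eq_left hin]
        · rw (transparency := .default) [if_neg hin, show (1:ℝ) - ((1:unitInterval):ℝ) = 0 by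
            rw [Set.Icc.coe_one]; ring, zero_mul, jclamp_eq_zero le_rfl,
            min_eq_right (by linarith : (1:ℝ) ≤ 2 * (2 * (τ:ℝ) *
              (1 - vF W w₀ hW (x (Fin.last m)) 1))), jclamp_eq_one le_rfl]
          rw [wedge_inr_base W w₀ m (Or.inl rfl),
            wedge_inl_base W w₀ m (Or.inr (Or.inl rfl))]
      · rw [if_neg h2]
        have h2' := not_le.mp h2
        have ht1 : (τ:ℝ) ≤ 1 := τ.2.2
        have key : Quot.mk _ (Sum.inl (Quot.mk _
            (Quot.mk _ (Fin.snoc (Fin.init x)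
              (uF W w₀ hW (x (Fin.last m)) 1) : Fin (m+1) → W),
            jclamp (min (2 * (2 * (τ:ℝ) * (1 - vF W w₀ hW (x (Fin.last m)) 1))) 1)))) =
            wedgeBase (SPt W w₀ m) (SAt W m) (suspBase _ _) (fHatBase W m) := by
          rcases uv_dichotomy W w₀ hW (x (Fin.last m)) 1 with hval | hval
          · refine wedge_inl_base W w₀ m (Or.inr (Or.inl ?_))
            show jclamp (min (2 * (2 * (τ:ℝ) * (1 - vF W w₀ hW (x (Fin.last m)) 1))) 1) = 1
            rw [hval, Set.Icc.coe_zero, min_eq_right (by nlinarith : (1:ℝ) ≤ 2 * (2 * (τ:ℝ) * (1 - 0)))]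
            exact jclamp_eq_one le_rfl
          · refine wedge_inl_base W w₀ m (Or.inr (Or.inr ?_))
            rw [hval]
            exact mk_eq_pinchedBase W w₀ m (Fin.snoc_last _ _)
        by_cases hin : 2 * ((2 - 2 * (τ:ℝ)) * (1 - vF W w₀ hW (x (Fin.last m)) 1)) ≤ 1
        · rw (transparency := .default) [if_pos hin, key]
        · rw (transparency := .default) [if_neg hin, show (1:ℝ) - ((1:unitInterval):ℝ) = 0 by
            rw [Set.Icc.coe_one]; ring, zero_mul, jclamp_eq_zero le_rfl, key,
            wedge_inr_base W w₀ m (Or.inl rfl)]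
  · intro s
    show kappa1raw W w₀ m hW s ((fun _ => w₀), 0) = _
    rw [kappa1raw_ends W w₀ m hW s _ 0 (Or.inl rfl)]
    show _ = Fc W w₀ m (Gc W w₀ m hW (inlC W w₀ m (suspBase _ _)))
    rw [show Gc W w₀ m hW (inlC W w₀ m (suspBase _ _)) =
      sC W w₀ m hW (suspBase _ _) from rfl, sC_base W w₀ m hW, Fc_base W w₀ m]

end SideTwoH

/-! ### Side 2: remaining homotopies and assembly -/

section Assemble

variable (m : ℕ) (hW : WellPointed.{u, u} W w₀)

/-- `κ2`: undoing the collar deformation. -/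
def kappa2raw (s : unitInterval) (q : (Fin (m+1) → W) × unitInterval) : WdT W w₀ m :=
  Quot.mk _ (Sum.inl (Quot.mk _ (Quot.mk _
    (Fin.snoc (Fin.init q.1)
      (uF W w₀ hW (q.1 (Fin.last m)) (unitInterval.symm s)) : Fin (m+1) → W),
    jclamp (min (2 * (2 * q.2 *
      (1 - vF W w₀ hW (q.1 (Fin.last m)) (unitInterval.symm s)))) 1))))

lemma kappa2raw_continuous :
    Continuous fun q : unitInterval × ((Fin (m+1) → W) × unitInterval) =>
      kappa2raw W w₀ m hW q.1 q.2 := by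
  have ht : Continuous fun q : unitInterval × ((Fin (m+1) → W) × unitInterval) =>
      ((q.2.2 : unitInterval) : ℝ) :=
    continuous_subtype_val.comp (continuous_snd.comp continuous_snd)
  have hpair : Continuous fun q : unitInterval × ((Fin (m+1) → W) × unitInterval) =>
      ((q.2.1 (Fin.last m), unitInterval.symm q.1) : W × unitInterval) :=
    ((continuous_apply _).comp (continuous_fst.comp continuous_snd)).prodMk
      (unitInterval.continuous_symm.comp continuous_fst)
  have hu : Continuous fun q : unitInterval × ((Fin (m+1) → W) × unitInterval) =>
      uF W w₀ hW (q.2.1 (Fin.last m)) (unitInterval.symm q.1) := by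
    exact (uF_continuous W w₀ hW).comp hpair
  have hv : Continuous fun q : unitInterval × ((Fin (m+1) → W) × unitInterval) =>
      ((vF W w₀ hW (q.2.1 (Fin.last m)) (unitInterval.symm q.1) : unitInterval) : ℝ) := by
    exact continuous_subtype_val.comp ((vF_continuous W w₀ hW).comp hpair)
  have hinit : Continuous fun q : unitInterval × ((Fin (m+1) → W) × unitInterval) =>
      Fin.init q.2.1 :=
    (continuous_finInit W m).comp (continuous_fst.comp continuous_snd)
  exact continuous_quot_mk.comp (continuous_inl.comp (continuous_quot_mk.comp
    ((continuous_quot_mk.comp (continuous_finSnoc W m hinit hu)).prodMk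
      (jclamp_continuous.comp ((continuous_const.mul ((continuous_const.mul ht).mul
        (continuous_const.sub hv))).min continuous_const)))))

lemma kappa2raw_last (s : unitInterval) (t : unitInterval) (x : Fin (m+1) → W)
    (h : x (Fin.last m) = w₀) :
    kappa2raw W w₀ m hW s (x, t) = wedgeBase _ _ _ _ := by
  refine wedge_inl_base W w₀ m (Or.inr (Or.inr ?_))
  show Quot.mk (PinchRel W w₀ m) (Fin.snoc (Fin.init x)
    (uF W w₀ hW (x (Fin.last m)) (unitInterval.symm s)) : Fin (m+1) → W) = pinchedBase W w₀ m
  rw [h, uF_base]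
  exact mk_eq_pinchedBase W w₀ m (Fin.snoc_last _ _)

lemma kappa2raw_ends (s : unitInterval) (x : Fin (m+1) → W) (t : unitInterval)
    (h : t = 0 ∨ t = 1) :
    kappa2raw W w₀ m hW s (x, t) = wedgeBase _ _ _ _ := by
  rcases h with h | h
  · refine wedge_inl_base W w₀ m (Or.inl ?_)
    show jclamp (min (2 * (2 * (t:ℝ) *
      (1 - vF W w₀ hW (x (Fin.last m)) (unitInterval.symm s)))) 1) = 0
    rw [h, Set.Icc.coe_zero, mul_zero, zero_mul, mul_zero, show min (0:ℝ) 1 = 0 by norm_num]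
    exact jclamp_eq_zero le_rfl
  · rcases uv_dichotomy W w₀ hW (x (Fin.last m)) (unitInterval.symm s) with hval | hval
    · refine wedge_inl_base W w₀ m (Or.inr (Or.inl ?_))
      show jclamp (min (2 * (2 * (t:ℝ) *
        (1 - vF W w₀ hW (x (Fin.last m)) (unitInterval.symm s)))) 1) = 1
      rw [h, hval, Set.Icc.coe_one, Set.Icc.coe_zero,
        show (2:ℝ) * (2 * 1 * (1 - 0)) = 4 by ring, show min (4:ℝ) 1 = 1 by norm_num]
      exact jclamp_eq_one le_rfl
    · refine wedge_inl_base W w₀ m (Or.inr (Or.inr ?_))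
      rw [hval]
      exact mk_eq_pinchedBase W w₀ m (Fin.snoc_last _ _)

/-- `ψ2 : M1 ≃ M0`. -/
def psi2 : ContinuousMap.HomotopyRel (M1c W w₀ m hW) (M0c W w₀ m)
    {suspBase (Pinched W w₀ m) (pinchedBase W w₀ m)} := by
  refine quotHomotopyRel (liftP W w₀ m (kappa2raw W w₀ m hW) (kappa2raw_last W w₀ m hW))
    (liftP_continuous W w₀ m _ _ (kappa2raw_continuous W w₀ m hW)) ?_ ?_ ?_ ?_
  · intro s p q hpq
    rw [liftP_wedge_collapsed W w₀ m _ _ (kappa2raw_ends W w₀ m hW) s p hpq.1,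
      liftP_wedge_collapsed W w₀ m _ _ (kappa2raw_ends W w₀ m hW) s q hpq.2]
  · rintro ⟨p, τ⟩
    induction p using Quot.ind with
    | _ x =>
      show kappa2raw W w₀ m hW 0 (x, τ) = m1raw W w₀ m hW (x, τ)
      rw [kappa2raw, m1raw]
      simp only [cOf, uOf, unitInterval.symm_zero]
  · rintro ⟨p, τ⟩
    induction p using Quot.ind with
    | _ x =>
      show kappa2raw W w₀ m hW 1 (x, τ) = m0raw W w₀ m (x, τ)
      rw [kappa2raw, m0raw, unitInterval.symm_one, vF_zero, uF_zero, Set.Icc.coe_zero,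
        sub_zero, mul_one, Fin.snoc_init_self, show (2:ℝ) * (2 * (τ:ℝ)) = 4 * τ by ring]
  · intro s
    show kappa2raw W w₀ m hW s ((fun _ => w₀), 0) = M1c W w₀ m hW (suspBase _ _)
    rw [kappa2raw_ends W w₀ m hW s _ 0 (Or.inl rfl)]
    show _ = m1raw W w₀ m hW ((fun _ => w₀), 0)
    rw [m1raw_ends W w₀ m hW _ 0 (Or.inl rfl)]

/-- `κ3`: final reparametrisation. -/
def kappa3raw (s : unitInterval) (q : (Fin (m+1) → W) × unitInterval) : WdT W w₀ m :=
  Quot.mk _ (Sum.inl (Quot.mk _ (Quot.mk _ q.1,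
    jclamp (min ((4 - 3 * (s:ℝ)) * q.2) 1))))

lemma kappa3raw_last (s : unitInterval) (t : unitInterval) (x : Fin (m+1) → W)
    (h : x (Fin.last m) = w₀) :
    kappa3raw W w₀ m s (x, t) = wedgeBase _ _ _ _ :=
  wedge_inl_base W w₀ m (Or.inr (Or.inr (mk_eq_pinchedBase W w₀ m h)))

lemma kappa3raw_ends (s : unitInterval) (x : Fin (m+1) → W) (t : unitInterval)
    (h : t = 0 ∨ t = 1) :
    kappa3raw W w₀ m s (x, t) = wedgeBase _ _ _ _ := by
  rcases h with h | h
  · refine wedge_inl_base W w₀ m (Or.inl ?_)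
    show jclamp (min ((4 - 3 * (s:ℝ)) * t) 1) = 0
    rw [h, Set.Icc.coe_zero, mul_zero, show min (0:ℝ) 1 = 0 by norm_num]
    exact jclamp_eq_zero le_rfl
  · refine wedge_inl_base W w₀ m (Or.inr (Or.inl ?_))
    show jclamp (min ((4 - 3 * (s:ℝ)) * t) 1) = 1
    rw [h, Set.Icc.coe_one, mul_one,
      min_eq_right (by have := s.2.2; linarith : (1:ℝ) ≤ 4 - 3 * s)]
    exact jclamp_eq_one le_rfl

/-- `ψ3 : M0 ≃ inl`. -/
def psi3 : ContinuousMap.HomotopyRel (M0c W w₀ m)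
    ((ContinuousMap.id (WdT W w₀ m)).comp (inlC W w₀ m))
    {suspBase (Pinched W w₀ m) (pinchedBase W w₀ m)} := by
  refine quotHomotopyRel (liftP W w₀ m (kappa3raw W w₀ m) (kappa3raw_last W w₀ m))
    (liftP_continuous W w₀ m _ _ (by
      have ht : Continuous fun q : unitInterval × ((Fin (m+1) → W) × unitInterval) =>
          ((q.2.2 : unitInterval) : ℝ) :=
        continuous_subtype_val.comp (continuous_snd.comp continuous_snd)
      have hs : Continuous fun q : unitInterval × ((Fin (m+1) → W) × unitInterval) =>
          ((q.1 : unitInterval) : ℝ) :=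
        continuous_subtype_val.comp continuous_fst
      exact continuous_quot_mk.comp (continuous_inl.comp (continuous_quot_mk.comp
        ((continuous_quot_mk.comp (continuous_fst.comp continuous_snd)).prodMk
          (jclamp_continuous.comp (((continuous_const.sub
            (continuous_const.mul hs)).mul ht).min continuous_const))))))) ?_ ?_ ?_ ?_
  · intro s p q hpq
    rw [liftP_wedge_collapsed W w₀ m _ _ (kappa3raw_ends W w₀ m) s p hpq.1,
      liftP_wedge_collapsed W w₀ m _ _ (kappa3raw_ends W w₀ m) s q hpq.2]
  · rintro ⟨p, τ⟩
    induction p using Quot.ind with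
    | _ x =>
      show kappa3raw W w₀ m 0 (x, τ) = m0raw W w₀ m (x, τ)
      rw [kappa3raw, m0raw, Set.Icc.coe_zero, show (4:ℝ) - 3 * 0 = 4 by norm_num]
  · rintro ⟨p, τ⟩
    induction p using Quot.ind with
    | _ x =>
      show kappa3raw W w₀ m 1 (x, τ) = Quot.mk _ (Sum.inl (Quot.mk _ (Quot.mk _ x, τ)))
      rw [kappa3raw, Set.Icc.coe_one, show (4:ℝ) - 3 * 1 = 1 by norm_num, one_mul,
        min_eq_left (τ.2.2 : (τ:ℝ) ≤ 1), jclamp_coe_self]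
  · intro s
    show kappa3raw W w₀ m s ((fun _ => w₀), 0) = M0c W w₀ m (suspBase _ _)
    rw [kappa3raw_ends W w₀ m s _ 0 (Or.inl rfl)]
    show _ = m0raw W w₀ m ((fun _ => w₀), 0)
    rw [m0raw_ends W w₀ m _ 0 (Or.inl rfl)]

/-- Side 2: `F ∘ G` is homotopic to the identity rel the basepoint. -/
lemma side_two : ((Fc W w₀ m).comp (Gc W w₀ m hW)).HomotopicRel
    (ContinuousMap.id (WdT W w₀ m))
    {wedgeBase (SPt W w₀ m) (SAt W m) (suspBase _ _) (fHatBase W m)} :=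
  ⟨wedgeHomotopyRel W w₀ m
    (((psi1 W w₀ m hW).trans (psi2 W w₀ m hW)).trans (psi3 W w₀ m))
    (psiR W w₀ m hW)⟩

end Assemble
end
theorem fHat_homotopyEquiv_suspPinched_wedge (m : ℕ)
    (hW : WellPointed.{u, u} W w₀) :
    PtdHomotopyEquiv (FHat W (m + 1))
      (Wedge (Susp (Pinched W w₀ m) (pinchedBase W w₀ m)) (FHat W m)
        (suspBase (Pinched W w₀ m) (pinchedBase W w₀ m)) (fHatBase W m))
      (fHatBase W (m + 1))
      (wedgeBase (Susp (Pinched W w₀ m) (pinchedBase W w₀ m)) (FHat W m)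
        (suspBase (Pinched W w₀ m) (pinchedBase W w₀ m)) (fHatBase W m)) := by
  refine ⟨Fc W w₀ m, Gc W w₀ m hW, ?_, ?_, ?_, ?_⟩
  · exact Fc_base W w₀ m
  · exact Gc_base W w₀ m hW
  · exact side_one W w₀ m hW
  · exact side_two W w₀ m hW
end

section
/- Let A, B, C be pointed spaces having the homotopy type of compactly generated Hausdorff spaces, X a pointed space, and let α ∈ [ΣA,X], β ∈ [ΣB,X], γ ∈ [ΣC,X] with images ᾱ, β̄, γ̄ in the Fox group τ_{A×B×C}(X) under the suspensions of the coordinate projections. Then, in τ_{A×B×C}(X), (Σt₂₁₃)*([[β̄⁻¹, ᾱ], γ̄]^{β̄}) · (Σt₃₂₁)*([[γ̄⁻¹, β̄], ᾱ]^{γ̄}) · (Σt₁₃₂)*([[ᾱ⁻¹, γ̄], β̄]^{ᾱ}) = 1, where [·,·] denotes the group-theoretic commutator, x^y = yxy⁻¹, and t_{ijk} : A×B×C → (the product in the indicated order) are the coordinate-permuting homeomorphisms inducing (Σt_{ijk})* on τ-groups. -/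
/-!
STATEMENT 14: Let `A, B, C` be pointed spaces having the homotopy type of compactly
generated Hausdorff spaces, `X` a pointed space, and `α ∈ [ΣA,X]`, `β ∈ [ΣB,X]`,
`γ ∈ [ΣC,X]`, with images `ᾱ, β̄, γ̄` in the Fox groups of the triple products under
the (suspensions of the) coordinate projections.  Then, in `τ_{A×B×C}(X)`,

`(Σt₂₁₃)*([[β̄⁻¹,ᾱ],γ̄]^β̄) · (Σt₃₂₁)*([[γ̄⁻¹,β̄],ᾱ]^γ̄) · (Σt₁₃₂)*([[ᾱ⁻¹,γ̄],β̄]^ᾱ) = 1`,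

where `[·,·]` is the group-theoretic commutator, `x^y = y·x·y⁻¹`, and the twisting maps
`t₂₁₃ : A×B×C → B×A×C`, `t₃₂₁ : A×B×C → C×B×A`, `t₁₃₂ : A×B×C → A×C×B` permute the
coordinates, inducing pullbacks on the `τ`-groups.
All Fox groups are realized via the exponential law as fundamental groups of mapping
spaces ("homotopy type of compactly generated Hausdorff" hypotheses appear below).
-/
open ContinuousMap Topology CategoryTheory

universe u

noncomputable section

/-- The homomorphism on fundamental groups induced by a continuous map. -/
def indHom {X Y : Type u} [TopologicalSpace X] [TopologicalSpace Y] (f : C(X, Y)) (x : X) :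
    FundamentalGroup X x →* FundamentalGroup Y (f x) :=
  CategoryTheory.Functor.mapEnd ⟨x⟩
    (FundamentalGroupoid.fundamentalGroupoidFunctor.map (X := TopCat.of X) (Y := TopCat.of Y) (TopCat.ofHom f))

/-- `indHom` with a specified image basepoint. -/
def indHom' {X Y : Type u} [TopologicalSpace X] [TopologicalSpace Y] (f : C(X, Y)) (x : X)
    (y : Y) (h : f x = y) : FundamentalGroup X x →* FundamentalGroup Y y :=
  h ▸ indHom f x

variable (X : Type u) [TopologicalSpace X] (x₀ : X)

/-- The Fox group `τ_W(X) = [Σ(W ⊔ ∗), X]`, realized via the exponential law as the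
fundamental group of the space of unbased maps `W → X` based at the constant map. -/
abbrev Tau (W : Type u) [TopologicalSpace W] : Type u :=
  FundamentalGroup C(W, X) (ContinuousMap.const W x₀)

/-- The space of based maps `(A,a₀) → (X,x₀)`; its fundamental group (at the constant
map) is the group `[ΣA, X]`, by the exponential law. -/
def BasedMaps (A : Type u) [TopologicalSpace A] (a₀ : A) : Type u :=
  {f : C(A, X) // f a₀ = x₀}

instance (A : Type u) [TopologicalSpace A] (a₀ : A) :
    TopologicalSpace (BasedMaps X x₀ A a₀) := instTopologicalSpaceSubtype

/-- The constant based map. -/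
def basedMapsBase (A : Type u) [TopologicalSpace A] (a₀ : A) : BasedMaps X x₀ A a₀ :=
  ⟨ContinuousMap.const A x₀, rfl⟩

/-- The group `[ΣA, X]`, realized as `π₁` of the based mapping space. -/
abbrev SigmaGrp (A : Type u) [TopologicalSpace A] (a₀ : A) : Type u :=
  FundamentalGroup (BasedMaps X x₀ A a₀) (basedMapsBase X x₀ A a₀)

/-- Pullback `τ_W(X) → τ_V(X)` along a continuous map `V → W`. -/
def tauMap {V W : Type u} [TopologicalSpace V] [TopologicalSpace W] (p : C(V, W)) :
    Tau X x₀ W →* Tau X x₀ V :=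
  indHom' ⟨fun f => f.comp p, ContinuousMap.continuous_precomp p⟩
    (ContinuousMap.const W x₀) (ContinuousMap.const V x₀) (by ext v; rfl)

/-- The canonical homomorphism `[ΣA, X] → τ_A(X)`. -/
def sigmaToTau (A : Type u) [TopologicalSpace A] (a₀ : A) :
    SigmaGrp X x₀ A a₀ →* Tau X x₀ A :=
  indHom' ⟨Subtype.val, continuous_subtype_val⟩ (basedMapsBase X x₀ A a₀)
    (ContinuousMap.const A x₀) rfl

/-- The embedding `[ΣA, X] → τ_W(X)` determined by a map `p : W → A` (e.g. a product
projection). -/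
def sigmaToTauAlong {A W : Type u} [TopologicalSpace A] [TopologicalSpace W]
    (p : C(W, A)) (a₀ : A) : SigmaGrp X x₀ A a₀ →* Tau X x₀ W :=
  (tauMap X x₀ p).comp (sigmaToTau X x₀ A a₀)

/-- Group-theoretic commutator `(a,b) = a·b·a⁻¹·b⁻¹`. -/
def grpComm {G : Type v} [Group G] (a b : G) : G := a * b * a⁻¹ * b⁻¹

/-- Conjugation `a^b = b·a·b⁻¹`. -/
def grpConj {G : Type v} [Group G] (a b : G) : G := b * a * b⁻¹

/-- `(A,a₀)` has the pointed homotopy type of a compactly generated Hausdorff space. -/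
def HasCGHaussHomotopyType (A : Type u) [TopologicalSpace A] (a₀ : A) : Prop :=
  ∃ (A' : Type u) (_ : TopologicalSpace A') (a₀' : A'),
    T2Space A' ∧ CompactlyGeneratedSpace A' ∧ PtdHomotopyEquiv A A' a₀ a₀'


/-- Functoriality of `indHom`. -/
lemma indHom_comp {X Y Z : Type u} [TopologicalSpace X] [TopologicalSpace Y] [TopologicalSpace Z]
    (f : C(X, Y)) (g : C(Y, Z)) (x : X) :
    indHom (g.comp f) x = (indHom g (f x)).comp (indHom f x) := by
  ext a
  have key : FundamentalGroupoid.fundamentalGroupoidFunctor.map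
        (X := TopCat.of X) (Y := TopCat.of Z) (TopCat.ofHom (g.comp f)) =
      (FundamentalGroupoid.fundamentalGroupoidFunctor.map (X := TopCat.of X) (Y := TopCat.of Y) (TopCat.ofHom f))
        ≫ (FundamentalGroupoid.fundamentalGroupoidFunctor.map (Y := TopCat.of Z) (TopCat.ofHom g)) :=
    FundamentalGroupoid.fundamentalGroupoidFunctor.map_comp
      (X := TopCat.of X) (Y := TopCat.of Y) (Z := TopCat.of Z) (TopCat.ofHom f) (TopCat.ofHom g)
  have h2 := Functor.congr_hom key a
  exact h2.trans ((Category.id_comp _).trans (Category.comp_id _))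

/-- Functoriality of `indHom'`. -/
lemma indHom'_comp {X Y Z : Type u} [TopologicalSpace X] [TopologicalSpace Y] [TopologicalSpace Z]
    (f : C(X, Y)) (g : C(Y, Z)) (x : X) (y : Y) (z : Z) (h1 : f x = y) (h2 : g y = z)
    (h3 : (g.comp f) x = z) :
    indHom' (g.comp f) x z h3 = (indHom' g y z h2).comp (indHom' f x y h1) := by
  subst h1; subst h2
  have e1 : indHom' (g.comp f) x (g (f x)) h3 = indHom (g.comp f) x := rfl
  have e2 : indHom' g (f x) (g (f x)) rfl = indHom g (f x) := rfl
  have e3 : indHom' f x (f x) rfl = indHom f x := rfl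
  rw [e1, e2, e3, indHom_comp]

/-- Pullbacks of Fox groups compose contravariantly (pointwise form). -/
lemma tauMap_tauMap {U V W : Type u} [TopologicalSpace U] [TopologicalSpace V]
    [TopologicalSpace W] (t : C(U, V)) (p : C(V, W)) (s : Tau X x₀ W) :
    tauMap X x₀ t (tauMap X x₀ p s) = tauMap X x₀ (p.comp t) s := by
  have h := indHom'_comp (X := C(W, X)) (Y := C(V, X)) (Z := C(U, X))
    ⟨fun f => f.comp p, ContinuousMap.continuous_precomp p⟩
    ⟨fun f => f.comp t, ContinuousMap.continuous_precomp t⟩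
    (ContinuousMap.const W x₀) (ContinuousMap.const V x₀) (ContinuousMap.const U x₀)
    (by ext v; rfl) (by ext u; rfl) (by ext u; rfl)
  exact (DFunLike.congr_fun h s).symm

theorem jacobi_identity_commutators
    (A B C X : Type u) [TopologicalSpace A] [TopologicalSpace B] [TopologicalSpace C]
    [TopologicalSpace X] (a₀ : A) (b₀ : B) (c₀ : C) (x₀ : X)
    (hA : HasCGHaussHomotopyType A a₀) (hB : HasCGHaussHomotopyType B b₀)
    (hC : HasCGHaussHomotopyType C c₀)
    (α : SigmaGrp X x₀ A a₀) (β : SigmaGrp X x₀ B b₀) (γ : SigmaGrp X x₀ C c₀) :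
    -- images of α, β, γ in τ_{B×A×C}(X)
    (let αb := sigmaToTauAlong X x₀ (⟨fun p => p.2.1, by fun_prop⟩ : C(B × A × C, A)) a₀ α
     let βb := sigmaToTauAlong X x₀ (⟨fun p => p.1, by fun_prop⟩ : C(B × A × C, B)) b₀ β
     let γb := sigmaToTauAlong X x₀ (⟨fun p => p.2.2, by fun_prop⟩ : C(B × A × C, C)) c₀ γ
     -- images of α, β, γ in τ_{C×B×A}(X)
     let αc := sigmaToTauAlong X x₀ (⟨fun p => p.2.2, by fun_prop⟩ : C(C × B × A, A)) a₀ α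
     let βc := sigmaToTauAlong X x₀ (⟨fun p => p.2.1, by fun_prop⟩ : C(C × B × A, B)) b₀ β
     let γc := sigmaToTauAlong X x₀ (⟨fun p => p.1, by fun_prop⟩ : C(C × B × A, C)) c₀ γ
     -- images of α, β, γ in τ_{A×C×B}(X)
     let αa := sigmaToTauAlong X x₀ (⟨fun p => p.1, by fun_prop⟩ : C(A × C × B, A)) a₀ α
     let βa := sigmaToTauAlong X x₀ (⟨fun p => p.2.2, by fun_prop⟩ : C(A × C × B, B)) b₀ β
     let γa := sigmaToTauAlong X x₀ (⟨fun p => p.2.1, by fun_prop⟩ : C(A × C × B, C)) c₀ γ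
     -- twisting maps
     let t213 : C(A × B × C, B × A × C) := ⟨fun p => (p.2.1, p.1, p.2.2), by fun_prop⟩
     let t321 : C(A × B × C, C × B × A) := ⟨fun p => (p.2.2, p.2.1, p.1), by fun_prop⟩
     let t132 : C(A × B × C, A × C × B) := ⟨fun p => (p.1, p.2.2, p.2.1), by fun_prop⟩
     tauMap X x₀ t213 (grpConj (grpComm (grpComm βb⁻¹ αb) γb) βb) *
     tauMap X x₀ t321 (grpConj (grpComm (grpComm γc⁻¹ βc) αc) γc) *
     tauMap X x₀ t132 (grpConj (grpComm (grpComm αa⁻¹ γa) βa) αa) = 1) := by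
  intro αb βb γb αc βc γc αa βa γa t213 t321 t132
  set pA : C(A × B × C, A) := ⟨fun p => p.1, by fun_prop⟩ with hpA
  set pB : C(A × B × C, B) := ⟨fun p => p.2.1, by fun_prop⟩ with hpB
  set pC : C(A × B × C, C) := ⟨fun p => p.2.2, by fun_prop⟩ with hpC
  have hα1 : tauMap X x₀ t213 αb = sigmaToTauAlong X x₀ pA a₀ α :=
    tauMap_tauMap X x₀ t213 _ (sigmaToTau X x₀ A a₀ α)
  have hβ1 : tauMap X x₀ t213 βb = sigmaToTauAlong X x₀ pB b₀ β :=
    tauMap_tauMap X x₀ t213 _ (sigmaToTau X x₀ B b₀ β)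
  have hγ1 : tauMap X x₀ t213 γb = sigmaToTauAlong X x₀ pC c₀ γ :=
    tauMap_tauMap X x₀ t213 _ (sigmaToTau X x₀ C c₀ γ)
  have hα2 : tauMap X x₀ t321 αc = sigmaToTauAlong X x₀ pA a₀ α :=
    tauMap_tauMap X x₀ t321 _ (sigmaToTau X x₀ A a₀ α)
  have hβ2 : tauMap X x₀ t321 βc = sigmaToTauAlong X x₀ pB b₀ β :=
    tauMap_tauMap X x₀ t321 _ (sigmaToTau X x₀ B b₀ β)
  have hγ2 : tauMap X x₀ t321 γc = sigmaToTauAlong X x₀ pC c₀ γ :=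
    tauMap_tauMap X x₀ t321 _ (sigmaToTau X x₀ C c₀ γ)
  have hα3 : tauMap X x₀ t132 αa = sigmaToTauAlong X x₀ pA a₀ α :=
    tauMap_tauMap X x₀ t132 _ (sigmaToTau X x₀ A a₀ α)
  have hβ3 : tauMap X x₀ t132 βa = sigmaToTauAlong X x₀ pB b₀ β :=
    tauMap_tauMap X x₀ t132 _ (sigmaToTau X x₀ B b₀ β)
  have hγ3 : tauMap X x₀ t132 γa = sigmaToTauAlong X x₀ pC c₀ γ :=
    tauMap_tauMap X x₀ t132 _ (sigmaToTau X x₀ C c₀ γ)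
  simp only [grpConj, grpComm, map_mul, map_inv, hα1, hβ1, hγ1, hα2, hβ2, hγ2, hα3, hβ3, hγ3]
  group
end
end
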